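/- arXiv:0803.2026 — 4 statements merged into one kernel-verified Lean document; each statement's English description precedes it below -/
import Mathlib

section
/- Let f ∈ ℂ[x₁,…,xₙ] and let h ∈ ℂ[x₁,…,x_{n+1}] have zero constant term. Set g := f + x_{n+1}²·(1+h) ∈ ℂ[x₁,…,x_{n+1}], where f is viewed as a polynomial in n+1 variables via the inclusion of variables. Then the Tjurina algebra T_g, computed in ℂ[[x₁,…,x_{n+1}]], is isomorphic as a ℂ-algebra to the Tjurina algebra T_f, computed in ℂ[[x₁,…,xₙ]]. -/
open MvPolynomial

noncomputable section

/-- Two formal power series are *contact equivalent* if one is a unit times an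
algebra-automorphism image of the other. -/
def ContactEquiv {N : ℕ} (f g : MvPowerSeries (Fin N) ℂ) : Prop :=
  ∃ (φ : MvPowerSeries (Fin N) ℂ ≃ₐ[ℂ] MvPowerSeries (Fin N) ℂ)
    (u : (MvPowerSeries (Fin N) ℂ)ˣ), f = (u : MvPowerSeries (Fin N) ℂ) * φ g

/-- The Tjurina ideal ⟨f, ∂f/∂x₁, …, ∂f/∂x_N⟩ of a polynomial, as an ideal of the
formal power series ring. -/
def tjurinaIdeal {N : ℕ} (f : MvPolynomial (Fin N) ℂ) : Ideal (MvPowerSeries (Fin N) ℂ) :=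
  Ideal.span (insert (↑f) (Set.range fun i =>
    ((pderiv i f : MvPolynomial (Fin N) ℂ) : MvPowerSeries (Fin N) ℂ)))

/-- The Tjurina algebra ℂ[[x₁,…,x_N]]/⟨f, ∂f/∂x₁,…,∂f/∂x_N⟩. -/
abbrev TjurinaAlgebra {N : ℕ} (f : MvPolynomial (Fin N) ℂ) :=
  MvPowerSeries (Fin N) ℂ ⧸ tjurinaIdeal f

namespace StableTjurina

variable {n : ℕ}

/-- Extend an exponent vector in `n` variables to `n+1` variables (zero at the last). -/
def emb (d : Fin n →₀ ℕ) : Fin (n + 1) →₀ ℕ := Finsupp.mapDomain Fin.castSucc d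

/-- Restrict an exponent vector in `n+1` variables to the first `n`. -/
def res (d : Fin (n + 1) →₀ ℕ) : Fin n →₀ ℕ :=
  Finsupp.comapDomain Fin.castSucc d ((Fin.castSucc_injective n).injOn)

lemma last_not_range : Fin.last n ∉ Set.range (Fin.castSucc : Fin n → Fin (n + 1)) := by
  rintro ⟨j, hj⟩
  exact absurd hj (Fin.castSucc_lt_last j).ne

@[simp] lemma emb_apply_castSucc (d : Fin n →₀ ℕ) (j : Fin n) :
    emb d (Fin.castSucc j) = d j :=
  Finsupp.mapDomain_apply (Fin.castSucc_injective n) d j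

@[simp] lemma emb_apply_last (d : Fin n →₀ ℕ) : emb d (Fin.last n) = 0 :=
  Finsupp.mapDomain_notin_range d _ last_not_range

@[simp] lemma res_apply (d : Fin (n + 1) →₀ ℕ) (j : Fin n) :
    res d j = d (Fin.castSucc j) := rfl

@[simp] lemma res_emb (d : Fin n →₀ ℕ) : res (emb d) = d := by
  ext j; simp

lemma emb_res (d : Fin (n + 1) →₀ ℕ) (hd : d (Fin.last n) = 0) : emb (res d) = d := by
  ext i
  refine Fin.lastCases ?_ ?_ i
  · simp [hd]
  · intro j; simp

lemma emb_add (p q : Fin n →₀ ℕ) : emb (p + q) = emb p + emb q :=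
  Finsupp.mapDomain_add

lemma res_add (p q : Fin (n + 1) →₀ ℕ) : res (p + q) = res p + res q := by
  ext j; simp

lemma emb_injective : Function.Injective (emb (n := n)) :=
  Finsupp.mapDomain_injective (Fin.castSucc_injective n)

@[simp] lemma emb_zero : emb (0 : Fin n →₀ ℕ) = 0 := Finsupp.mapDomain_zero

@[simp] lemma res_zero : res (0 : Fin (n + 1) →₀ ℕ) = 0 := by ext j; simp

lemma emb_eq_zero_iff {d : Fin n →₀ ℕ} : emb d = 0 ↔ d = 0 := by
  constructor
  · intro hd; apply emb_injective; simpa using hd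
  · rintro rfl; simp

end StableTjurina


namespace StableTjurina
variable {n : ℕ}
open MvPowerSeries

lemma last_eq_zero_of_add_eq_emb {p q : Fin (n + 1) →₀ ℕ} {d : Fin n →₀ ℕ}
    (hpq : p + q = emb d) : p (Fin.last n) = 0 ∧ q (Fin.last n) = 0 := by
  have := DFunLike.congr_fun hpq (Fin.last n)
  simp only [Finsupp.add_apply, emb_apply_last] at this
  exact ⟨Nat.eq_zero_of_add_eq_zero_right this, Nat.eq_zero_of_add_eq_zero_left this⟩

/-- Setting the last variable to `0`, as a bare function. -/
def piFun (F : MvPowerSeries (Fin (n + 1)) ℂ) : MvPowerSeries (Fin n) ℂ :=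
  fun d => F (emb d)

/-- Setting the last variable to `0`, as a ring hom on power series. -/
def piRing : MvPowerSeries (Fin (n + 1)) ℂ →+* MvPowerSeries (Fin n) ℂ where
  toFun := piFun
  map_one' := by
    funext d
    show coeff (emb d) (1 : MvPowerSeries (Fin (n + 1)) ℂ)
      = coeff d (1 : MvPowerSeries (Fin n) ℂ)
    
    rw [MvPowerSeries.coeff_one, MvPowerSeries.coeff_one]
    simp [emb_eq_zero_iff]
  map_zero' := rfl
  map_add' F G := rfl
  map_mul' F G := by
    funext d
    show coeff (emb d) (F * G) = coeff d (piFun F * piFun G)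
    rw [MvPowerSeries.coeff_mul, MvPowerSeries.coeff_mul]
    refine Finset.sum_nbij' (fun p => (res p.1, res p.2)) (fun p => (emb p.1, emb p.2))
      ?_ ?_ ?_ ?_ ?_
    · rintro ⟨p, q⟩ hp
      rw [Finset.HasAntidiagonal.mem_antidiagonal] at hp ⊢
      obtain ⟨h1, h2⟩ := last_eq_zero_of_add_eq_emb hp
      apply emb_injective
      rw [emb_add, emb_res _ h1, emb_res _ h2, hp]
    · rintro ⟨p, q⟩ hp
      rw [Finset.HasAntidiagonal.mem_antidiagonal] at hp ⊢
      rw [← emb_add, hp]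
    · rintro ⟨p, q⟩ hp
      rw [Finset.HasAntidiagonal.mem_antidiagonal] at hp
      obtain ⟨h1, h2⟩ := last_eq_zero_of_add_eq_emb hp
      simp [emb_res _ h1, emb_res _ h2]
    · rintro ⟨p, q⟩ hp
      simp
    · rintro ⟨p, q⟩ hp
      rw [Finset.HasAntidiagonal.mem_antidiagonal] at hp
      obtain ⟨h1, h2⟩ := last_eq_zero_of_add_eq_emb hp
      show F p * G q = F (emb (res p)) * G (emb (res q))
      rw [emb_res _ h1, emb_res _ h2]

@[simp] lemma coeff_piRing (F : MvPowerSeries (Fin (n + 1)) ℂ) (d : Fin n →₀ ℕ) :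
    coeff d (piRing F) = coeff (emb d) F := rfl

end StableTjurina

namespace StableTjurina
variable {n : ℕ}
open MvPowerSeries

lemma last_eq_zero_of_add {p q d : Fin (n + 1) →₀ ℕ} (hpq : p + q = d)
    (hd : d (Fin.last n) = 0) : p (Fin.last n) = 0 ∧ q (Fin.last n) = 0 := by
  have := DFunLike.congr_fun hpq (Fin.last n)
  simp only [Finsupp.add_apply, hd] at this
  exact ⟨Nat.eq_zero_of_add_eq_zero_right this, Nat.eq_zero_of_add_eq_zero_left this⟩

/-- Inclusion of power series in `n` variables into `n+1` variables, bare function. -/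
def sigFun (F : MvPowerSeries (Fin n) ℂ) : MvPowerSeries (Fin (n + 1)) ℂ :=
  fun d => if d (Fin.last n) = 0 then F (res d) else 0

lemma coeff_sigFun (F : MvPowerSeries (Fin n) ℂ) (d : Fin (n + 1) →₀ ℕ) :
    coeff d (sigFun F) = if d (Fin.last n) = 0 then coeff (res d) F else 0 := rfl

/-- Inclusion of power series in `n` variables into `n+1` variables, as a ring hom. -/
def sigRing : MvPowerSeries (Fin n) ℂ →+* MvPowerSeries (Fin (n + 1)) ℂ where
  toFun := sigFun
  map_one' := by
    funext d
    show coeff d (sigFun 1) = coeff d (1 : MvPowerSeries (Fin (n + 1)) ℂ)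
    rw [coeff_sigFun, MvPowerSeries.coeff_one, MvPowerSeries.coeff_one]
    by_cases hd : d (Fin.last n) = 0
    · rw [if_pos hd]
      by_cases hd0 : d = 0
      · subst hd0; simp
      · rw [if_neg hd0, if_neg]
        intro hres
        exact hd0 (by rw [← emb_res d hd, hres, emb_zero])
    · rw [if_neg hd, if_neg]
      rintro rfl; simp at hd
  map_zero' := by
    funext d
    show (if d (Fin.last n) = 0 then (0 : ℂ) else 0) = 0
    simp
  map_add' F G := by
    funext d
    show sigFun (F + G) d = sigFun F d + sigFun G d
    simp only [sigFun]
    split_ifs with hd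
    · rfl
    · simp
  map_mul' F G := by
    funext d
    show coeff d (sigFun (F * G)) = coeff d (sigFun F * sigFun G)
    rw [coeff_sigFun, MvPowerSeries.coeff_mul]
    by_cases hd : d (Fin.last n) = 0
    · rw [if_pos hd, MvPowerSeries.coeff_mul]
      refine Finset.sum_nbij' (fun p => (emb p.1, emb p.2)) (fun p => (res p.1, res p.2))
        ?_ ?_ ?_ ?_ ?_
      · rintro ⟨p, q⟩ hp
        rw [Finset.HasAntidiagonal.mem_antidiagonal] at hp ⊢
        rw [← emb_add, hp, emb_res _ hd]
      · rintro ⟨p, q⟩ hp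
        rw [Finset.HasAntidiagonal.mem_antidiagonal] at hp ⊢
        obtain ⟨h1, h2⟩ := last_eq_zero_of_add hp hd
        rw [← res_add, hp]
      · rintro ⟨p, q⟩ hp; simp
      · rintro ⟨p, q⟩ hp
        rw [Finset.HasAntidiagonal.mem_antidiagonal] at hp
        obtain ⟨h1, h2⟩ := last_eq_zero_of_add hp hd
        simp [emb_res _ h1, emb_res _ h2]
      · rintro ⟨p, q⟩ hp
        rw [coeff_sigFun, coeff_sigFun, if_pos (by simp), if_pos (by simp)]
        rw [res_emb, res_emb]
    · rw [if_neg hd, MvPowerSeries.coeff_mul]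
      refine (Finset.sum_eq_zero ?_).symm
      rintro ⟨p, q⟩ hp
      rw [Finset.HasAntidiagonal.mem_antidiagonal] at hp
      rw [coeff_sigFun, coeff_sigFun]
      by_cases h1 : p (Fin.last n) = 0
      · rw [if_pos h1, if_neg, mul_zero]
        intro h2
        exact hd (by rw [← hp, Finsupp.add_apply, h1, h2])
      · rw [if_neg h1, zero_mul]

@[simp] lemma coeff_sigRing (F : MvPowerSeries (Fin n) ℂ) (d : Fin (n + 1) →₀ ℕ) :
    coeff d (sigRing F) = if d (Fin.last n) = 0 then coeff (res d) F else 0 := rfl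

lemma piRing_sigRing (F : MvPowerSeries (Fin n) ℂ) : piRing (sigRing F) = F := by
  funext d
  show coeff (emb d) (sigRing F) = coeff d F
  rw [coeff_sigRing, if_pos (by simp), res_emb]

lemma piRing_surjective : Function.Surjective (piRing (n := n)) :=
  fun F => ⟨sigRing F, piRing_sigRing F⟩

end StableTjurina

namespace StableTjurina
variable {n : ℕ}
open MvPowerSeries

lemma piRing_C (a : ℂ) : piRing ((C a : MvPowerSeries (Fin (n + 1)) ℂ)) = (C a : MvPowerSeries (Fin n) ℂ) := by
  funext d
  show coeff (emb d) ((C a : MvPowerSeries (Fin (n + 1)) ℂ)) = coeff d ((C a : MvPowerSeries (Fin n) ℂ))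
  rw [MvPowerSeries.coeff_C, MvPowerSeries.coeff_C]
  simp [emb_eq_zero_iff]

lemma sigRing_C (a : ℂ) : sigRing ((C a : MvPowerSeries (Fin n) ℂ)) = (C a : MvPowerSeries (Fin (n + 1)) ℂ) := by
  funext d
  show coeff d (sigRing ((C a : MvPowerSeries (Fin n) ℂ))) = coeff d ((C a : MvPowerSeries (Fin (n + 1)) ℂ))
  rw [coeff_sigRing, MvPowerSeries.coeff_C, MvPowerSeries.coeff_C]
  by_cases hd : d (Fin.last n) = 0
  · rw [if_pos hd]
    by_cases hd0 : d = 0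
    · subst hd0; simp
    · rw [if_neg hd0, if_neg]
      intro hres
      exact hd0 (by rw [← emb_res d hd, hres, emb_zero])
  · rw [if_neg hd, if_neg]
    rintro rfl; simp at hd

/-- `piRing` as an algebra hom. -/
def piAlg : MvPowerSeries (Fin (n + 1)) ℂ →ₐ[ℂ] MvPowerSeries (Fin n) ℂ :=
  { piRing with
    commutes' := fun a => by
      simp only [MvPowerSeries.algebraMap_apply, Algebra.algebraMap_self, RingHom.id_apply]
      exact piRing_C a }

/-- `sigRing` as an algebra hom. -/
def sigAlg : MvPowerSeries (Fin n) ℂ →ₐ[ℂ] MvPowerSeries (Fin (n + 1)) ℂ :=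
  { sigRing with
    commutes' := fun a => by
      simp only [MvPowerSeries.algebraMap_apply, Algebra.algebraMap_self, RingHom.id_apply]
      exact sigRing_C a }

@[simp] lemma piAlg_apply (F) : piAlg (n := n) F = piRing F := rfl
@[simp] lemma sigAlg_apply (F) : sigAlg (n := n) F = sigRing F := rfl

lemma piRing_X_castSucc (j : Fin n) :
    piRing (MvPowerSeries.X (Fin.castSucc j) : MvPowerSeries (Fin (n + 1)) ℂ)
      = MvPowerSeries.X j := by
  funext d
  show coeff (emb d) (MvPowerSeries.X (Fin.castSucc j) : MvPowerSeries (Fin (n + 1)) ℂ)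
    = coeff d (X j : MvPowerSeries (Fin n) ℂ)
  rw [MvPowerSeries.coeff_X, MvPowerSeries.coeff_X]
  have : Finsupp.single (Fin.castSucc j) 1 = emb (Finsupp.single j 1) := by
    rw [emb, Finsupp.mapDomain_single]
  rw [this]
  simp [emb_injective.eq_iff]

lemma piRing_X_last : piRing (MvPowerSeries.X (Fin.last n) : MvPowerSeries (Fin (n + 1)) ℂ) = 0 := by
  funext d
  show coeff (emb d) (MvPowerSeries.X (Fin.last n) : MvPowerSeries (Fin (n + 1)) ℂ) = 0
  rw [MvPowerSeries.coeff_X, if_neg]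
  intro hd
  have := DFunLike.congr_fun hd (Fin.last n)
  simp at this

lemma sigRing_X (j : Fin n) :
    sigRing (MvPowerSeries.X j : MvPowerSeries (Fin n) ℂ)
      = MvPowerSeries.X (Fin.castSucc j) := by
  funext d
  show coeff d (sigRing (MvPowerSeries.X j : MvPowerSeries (Fin n) ℂ))
    = coeff d (MvPowerSeries.X (Fin.castSucc j) : MvPowerSeries (Fin (n + 1)) ℂ)
  rw [coeff_sigRing, MvPowerSeries.coeff_X]
  have hsing : Finsupp.single (Fin.castSucc j) 1 = emb (Finsupp.single j 1) := by
    rw [emb, Finsupp.mapDomain_single]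
  by_cases hd : d (Fin.last n) = 0
  · rw [if_pos hd, MvPowerSeries.coeff_X, hsing]
    by_cases hres : res d = Finsupp.single j 1
    · rw [if_pos hres, if_pos]
      rw [← emb_res d hd, hres]
    · rw [if_neg hres, if_neg]
      intro hde
      exact hres (by rw [← res_emb (Finsupp.single j 1), ← hde])
  · rw [if_neg hd, eq_comm, MvPowerSeries.coeff_X, if_neg]
    rintro rfl
    rw [hsing] at hd
    simp at hd

lemma piRing_coe_rename (p : MvPolynomial (Fin n) ℂ) :
    piRing ((MvPolynomial.rename Fin.castSucc p : MvPolynomial (Fin (n + 1)) ℂ) :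
      MvPowerSeries (Fin (n + 1)) ℂ) = (p : MvPowerSeries (Fin n) ℂ) := by
  have : (piRing.comp (MvPolynomial.coeToMvPowerSeries.ringHom.comp
      (MvPolynomial.rename (Fin.castSucc : Fin n → Fin (n + 1))).toRingHom))
      = MvPolynomial.coeToMvPowerSeries.ringHom := by
    apply MvPolynomial.ringHom_ext
    · intro a
      simp [piRing_C]
    · intro i
      simp [piRing_X_castSucc]
  exact DFunLike.congr_fun this p

lemma sigRing_coe (p : MvPolynomial (Fin n) ℂ) :
    sigRing (p : MvPowerSeries (Fin n) ℂ)
      = ((MvPolynomial.rename Fin.castSucc p : MvPolynomial (Fin (n + 1)) ℂ) :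
        MvPowerSeries (Fin (n + 1)) ℂ) := by
  have : (sigRing.comp (MvPolynomial.coeToMvPowerSeries.ringHom (σ := Fin n) (R := ℂ)))
      = MvPolynomial.coeToMvPowerSeries.ringHom.comp
        (MvPolynomial.rename (Fin.castSucc : Fin n → Fin (n + 1))).toRingHom := by
    apply MvPolynomial.ringHom_ext
    · intro a
      simp [sigRing_C]
    · intro i
      simp [sigRing_X]
  exact DFunLike.congr_fun this p

lemma exists_eq_X_mul_of_piRing_eq_zero (F : MvPowerSeries (Fin (n + 1)) ℂ)
    (hF : piRing F = 0) :
    ∃ G, F = (MvPowerSeries.X (Fin.last n) : MvPowerSeries (Fin (n + 1)) ℂ) * G := by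
  have hG : ∃ G : MvPowerSeries (Fin (n + 1)) ℂ,
      ∀ d, coeff d G = coeff (d + Finsupp.single (Fin.last n) 1) F :=
    ⟨fun d => F (d + Finsupp.single (Fin.last n) 1), fun _ => rfl⟩
  obtain ⟨G, hGc⟩ := hG
  refine ⟨G, ?_⟩
  apply MvPowerSeries.ext
  intro d
  rw [MvPowerSeries.X_def, MvPowerSeries.coeff_monomial_mul]
  by_cases hle : Finsupp.single (Fin.last n) 1 ≤ d
  · rw [if_pos hle, one_mul, hGc, tsub_add_cancel_of_le hle]
  · rw [if_neg hle]
    have hd : d (Fin.last n) = 0 := by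
      by_contra hne
      exact hle (by
        rw [Finsupp.single_le_iff]
        omega)
    have : coeff (res d) (piRing F) = 0 := by rw [hF]; simp
    rw [coeff_piRing, emb_res d hd] at this
    exact this

end StableTjurina

section Main

open MvPolynomial StableTjurina

/-- Adding a square of a new variable (times a unit 1 + h) does not change the Tjurina
algebra: T_{f + x_{n+1}²(1+h)} ≅ T_f as ℂ-algebras. -/
theorem statement_4 {n : ℕ} (f : MvPolynomial (Fin n) ℂ)
    (h : MvPolynomial (Fin (n + 1)) ℂ) (hh0 : constantCoeff h = 0)
    (g : MvPolynomial (Fin (n + 1)) ℂ)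
    (hg : g = rename Fin.castSucc f + X (Fin.last n) ^ 2 * (1 + h)) :
    Nonempty (TjurinaAlgebra g ≃ₐ[ℂ] TjurinaAlgebra f) := by
  classical
  -- the last partial derivative of g is X_last * w with w a unit
  set w : MvPolynomial (Fin (n + 1)) ℂ :=
    2 * (1 + h) + X (Fin.last n) * pderiv (Fin.last n) h with hw
  have hrename_pd_last : pderiv (Fin.last n) (rename Fin.castSucc f) = 0 := by
    apply pderiv_eq_zero_of_notMem_vars
    intro hmem
    have := vars_rename (Fin.castSucc : Fin n → Fin (n + 1)) f hmem
    rw [Finset.mem_image] at this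
    obtain ⟨j, -, hj⟩ := this
    exact last_not_range ⟨j, hj⟩
  have hpg_last : pderiv (Fin.last n) g = X (Fin.last n) * w := by
    rw [hg, map_add, hrename_pd_last, zero_add, pderiv_mul, pderiv_pow, pderiv_X_self,
      map_add, pderiv_one, zero_add, hw]
    push_cast
    ring
  have hpg_cast : ∀ j : Fin n, pderiv (Fin.castSucc j) g
      = rename Fin.castSucc (pderiv j f) + X (Fin.last n) ^ 2 * pderiv (Fin.castSucc j) h := by
    intro j
    rw [hg, map_add, pderiv_rename (Fin.castSucc_injective n), pderiv_mul, pderiv_pow,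
      pderiv_X_of_ne (Fin.castSucc_lt_last j).ne', map_add, pderiv_one, zero_add]
    ring
  -- X_last lies in the Tjurina ideal of g
  have hw_unit : IsUnit ((w : MvPolynomial (Fin (n + 1)) ℂ) : MvPowerSeries (Fin (n + 1)) ℂ) := by
    rw [MvPowerSeries.isUnit_iff_constantCoeff]
    have : MvPowerSeries.constantCoeff (σ := Fin (n + 1)) (R := ℂ)
        ((w : MvPolynomial (Fin (n + 1)) ℂ) : MvPowerSeries (Fin (n + 1)) ℂ)
        = constantCoeff w := rfl
    rw [this, hw]
    simp [hh0, map_ofNat]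
  have hpd_last_mem : ((pderiv (Fin.last n) g : MvPolynomial (Fin (n + 1)) ℂ) :
      MvPowerSeries (Fin (n + 1)) ℂ) ∈ tjurinaIdeal g :=
    Ideal.subset_span (Set.mem_insert_of_mem _ ⟨Fin.last n, rfl⟩)
  have hXL : (MvPowerSeries.X (Fin.last n) : MvPowerSeries (Fin (n + 1)) ℂ) ∈ tjurinaIdeal g := by
    obtain ⟨u, hu⟩ := hw_unit
    have heq : (MvPowerSeries.X (Fin.last n) : MvPowerSeries (Fin (n + 1)) ℂ)
        = ((pderiv (Fin.last n) g : MvPolynomial (Fin (n + 1)) ℂ) :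
            MvPowerSeries (Fin (n + 1)) ℂ) * ↑u⁻¹ := by
      rw [hpg_last]
      push_cast
      rw [mul_assoc, ← hu, Units.mul_inv, mul_one]
    rw [heq]
    exact Ideal.mul_mem_right _ _ hpd_last_mem
  -- the quotient map
  set Φ : MvPowerSeries (Fin (n + 1)) ℂ →ₐ[ℂ] TjurinaAlgebra f :=
    (Ideal.Quotient.mkₐ ℂ (tjurinaIdeal f)).comp piAlg with hΦ
  have hΦ_apply : ∀ x, Φ x = Ideal.Quotient.mk (tjurinaIdeal f) (piRing x) := fun x => rfl
  have hker_iff : ∀ x, x ∈ RingHom.ker Φ ↔ piRing x ∈ tjurinaIdeal f := by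
    intro x
    rw [RingHom.mem_ker, hΦ_apply, Ideal.Quotient.eq_zero_iff_mem]
  -- piRing of the generators of I_g
  have hpi_g : piRing ((g : MvPolynomial (Fin (n + 1)) ℂ) : MvPowerSeries (Fin (n + 1)) ℂ)
      = (f : MvPowerSeries (Fin n) ℂ) := by
    rw [hg]
    push_cast
    rw [map_add, map_mul, map_pow, piRing_coe_rename, piRing_X_last]
    ring
  have hpi_pd_cast : ∀ j : Fin n,
      piRing ((pderiv (Fin.castSucc j) g : MvPolynomial (Fin (n + 1)) ℂ) :
        MvPowerSeries (Fin (n + 1)) ℂ)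
      = ((pderiv j f : MvPolynomial (Fin n) ℂ) : MvPowerSeries (Fin n) ℂ) := by
    intro j
    rw [hpg_cast j]
    push_cast
    rw [map_add, map_mul, map_pow, piRing_coe_rename, piRing_X_last]
    ring
  have hpi_pd_last : piRing ((pderiv (Fin.last n) g : MvPolynomial (Fin (n + 1)) ℂ) :
      MvPowerSeries (Fin (n + 1)) ℂ) = 0 := by
    rw [hpg_last]
    push_cast
    rw [map_mul, piRing_X_last, zero_mul]
  -- I_g ≤ ker Φ
  have hle : tjurinaIdeal g ≤ RingHom.ker Φ := by
    rw [tjurinaIdeal, Ideal.span_le]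
    rintro x (rfl | ⟨i, rfl⟩)
    · rw [SetLike.mem_coe, hker_iff, hpi_g]
      exact Ideal.subset_span (Set.mem_insert _ _)
    · rw [SetLike.mem_coe, hker_iff]
      refine Fin.lastCases ?_ ?_ i
      · rw [hpi_pd_last]
        exact Ideal.zero_mem _
      · intro j
        rw [hpi_pd_cast j]
        exact Ideal.subset_span (Set.mem_insert_of_mem _ ⟨j, rfl⟩)
  -- sigRing maps I_f into I_g
  have hsig : ∀ y ∈ tjurinaIdeal f, sigRing y ∈ tjurinaIdeal g := by
    have hmap : Ideal.map sigRing (tjurinaIdeal f) ≤ tjurinaIdeal g := by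
      rw [tjurinaIdeal, Ideal.map_span, Ideal.span_le]
      rintro x ⟨y, (rfl | ⟨j, rfl⟩), rfl⟩
      · rw [sigRing_coe]
        have key : ((rename Fin.castSucc f : MvPolynomial (Fin (n + 1)) ℂ) :
              MvPowerSeries (Fin (n + 1)) ℂ)
            = ((g : MvPolynomial (Fin (n + 1)) ℂ) : MvPowerSeries (Fin (n + 1)) ℂ)
              - MvPowerSeries.X (Fin.last n)
                * (MvPowerSeries.X (Fin.last n) * (1 + (h : MvPowerSeries (Fin (n + 1)) ℂ))) := by
          rw [hg]
          push_cast
          ring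
        rw [key]
        exact sub_mem (Ideal.subset_span (Set.mem_insert _ _))
          (Ideal.mul_mem_right _ _ hXL)
      · rw [sigRing_coe]
        have key : ((rename Fin.castSucc (pderiv j f) : MvPolynomial (Fin (n + 1)) ℂ) :
              MvPowerSeries (Fin (n + 1)) ℂ)
            = ((pderiv (Fin.castSucc j) g : MvPolynomial (Fin (n + 1)) ℂ) :
                MvPowerSeries (Fin (n + 1)) ℂ)
              - MvPowerSeries.X (Fin.last n)
                * (MvPowerSeries.X (Fin.last n)
                  * ((pderiv (Fin.castSucc j) h : MvPolynomial (Fin (n + 1)) ℂ) :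
                      MvPowerSeries (Fin (n + 1)) ℂ)) := by
          rw [hpg_cast j]
          push_cast
          ring
        rw [key]
        exact sub_mem (Ideal.subset_span (Set.mem_insert_of_mem _ ⟨Fin.castSucc j, rfl⟩))
          (Ideal.mul_mem_right _ _ hXL)
    intro y hy
    exact hmap (Ideal.mem_map_of_mem _ hy)
  -- ker Φ ≤ I_g
  have hge : RingHom.ker Φ ≤ tjurinaIdeal g := by
    intro x hx
    rw [hker_iff] at hx
    have hdecomp : x = sigRing (piRing x) + (x - sigRing (piRing x)) := by ring
    have hzero : piRing (x - sigRing (piRing x)) = 0 := by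
      rw [map_sub, piRing_sigRing, sub_self]
    obtain ⟨G, hG⟩ := exists_eq_X_mul_of_piRing_eq_zero _ hzero
    rw [hdecomp, hG]
    exact add_mem (hsig _ hx) (Ideal.mul_mem_right _ _ hXL)
  have hker : RingHom.ker Φ = tjurinaIdeal g := le_antisymm hge hle
  -- conclude
  have hsurj : Function.Surjective Φ := by
    intro y
    obtain ⟨z, rfl⟩ := Ideal.Quotient.mk_surjective y
    exact ⟨sigRing z, by rw [hΦ_apply, piRing_sigRing]⟩
  exact ⟨(Ideal.quotientEquivAlgOfEq ℂ hker.symm).trans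
    (Ideal.quotientKerAlgEquivOfSurjective hsurj)⟩

end Main
end
end

section
/- Let n ≥ 1, let α₁,…,αₙ and d be integers with 2 ≤ αᵢ ≤ d for all i, and let λ₁,…,λₙ ∈ ℂ satisfy αᵢ + d·λᵢ ≠ 0 for every i with αᵢ = d. Set f := Σᵢ xᵢ^{αᵢ} + Σᵢ λᵢ·xᵢ^d ∈ ℂ[x₁,…,xₙ]. Then the Tjurina ideal of f in ℂ[[x₁,…,xₙ]] equals the monomial ideal ⟨x₁^{α₁−1},…,xₙ^{αₙ−1}⟩, and consequently the Tjurina number satisfies τ(f) = ∏ᵢ (αᵢ − 1). -/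
open MvPolynomial

noncomputable section

namespace TjurinaAux

open MvPowerSeries

/-- The ideal of power series all of whose coefficients vanish on the box
`{e | ∀ i, e i < β i}`. -/
def boxIdeal {n : ℕ} (β : Fin n → ℕ) : Ideal (MvPowerSeries (Fin n) ℂ) where
  carrier := {g | ∀ e : Fin n →₀ ℕ, (∀ i, e i < β i) → MvPowerSeries.coeff e g = 0}
  add_mem' := by
    intro a b ha hb e he
    rw [map_add, ha e he, hb e he, add_zero]
  zero_mem' := by
    intro e he
    simp
  smul_mem' := by
    classical
    intro c x hx e he
    rw [smul_eq_mul, MvPowerSeries.coeff_mul]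
    refine Finset.sum_eq_zero fun p hp => ?_
    rw [Finset.HasAntidiagonal.mem_antidiagonal] at hp
    have h2 : ∀ i, p.2 i < β i := by
      intro i
      refine lt_of_le_of_lt ?_ (he i)
      have : p.2 i ≤ p.1 i + p.2 i := Nat.le_add_left _ _
      simpa [← hp, Finsupp.add_apply] using this
    rw [hx p.2 h2, mul_zero]

lemma mem_boxIdeal {n : ℕ} (β : Fin n → ℕ) (g : MvPowerSeries (Fin n) ℂ) :
    g ∈ boxIdeal β ↔
      ∀ e : Fin n →₀ ℕ, (∀ i, e i < β i) → MvPowerSeries.coeff e g = 0 :=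
  Iff.rfl

/-- Reinterpret a function as a power series. -/
def ofFun {n : ℕ} (g : (Fin n →₀ ℕ) → ℂ) : MvPowerSeries (Fin n) ℂ := g

lemma coeff_ofFun {n : ℕ} (g : (Fin n →₀ ℕ) → ℂ) (e : Fin n →₀ ℕ) :
    MvPowerSeries.coeff e (ofFun g) = g e := rfl

/-- Membership in the monomial ideal `⟨X₁^{β₁}, …, Xₙ^{βₙ}⟩` is equivalent to
the vanishing of all coefficients on the box. -/
lemma mem_span_iff {n : ℕ} (β : Fin n → ℕ) (g : MvPowerSeries (Fin n) ℂ) :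
    g ∈ Ideal.span (Set.range fun i =>
        (MvPowerSeries.X i : MvPowerSeries (Fin n) ℂ) ^ (β i)) ↔
      ∀ e : Fin n →₀ ℕ, (∀ i, e i < β i) → MvPowerSeries.coeff e g = 0 := by
  classical
  constructor
  · intro hg
    have hle : Ideal.span (Set.range fun i =>
        (MvPowerSeries.X i : MvPowerSeries (Fin n) ℂ) ^ (β i)) ≤ boxIdeal β := by
      rw [Ideal.span_le]
      rintro _ ⟨i, rfl⟩
      rw [SetLike.mem_coe, mem_boxIdeal]
      intro e he
      rw [MvPowerSeries.coeff_X_pow, if_neg]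
      intro h
      have := he i
      rw [h, Finsupp.single_eq_same] at this
      exact lt_irrefl _ this
    exact (mem_boxIdeal β g).mp (hle hg)
  · intro hg
    have key : g = ∑ i : Fin n, (MvPowerSeries.X i : MvPowerSeries (Fin n) ℂ) ^ (β i) *
        ofFun (fun e : Fin n →₀ ℕ => if (∀ j, j < i → e j < β j) then
            MvPowerSeries.coeff (e + Finsupp.single i (β i)) g else 0) := by
      apply MvPowerSeries.ext
      intro e
      rw [map_sum]
      by_cases hbox : ∀ i, e i < β i
      · rw [hg e hbox]
        symm
        refine Finset.sum_eq_zero fun i _ => ?_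
        rw [X_pow_eq, MvPowerSeries.coeff_monomial_mul, if_neg]
        intro hle
        exact absurd (Finsupp.single_le_iff.mp hle) (not_le.mpr (hbox i))
      · push_neg at hbox
        have hs : (Finset.filter (fun i => β i ≤ e i) Finset.univ).Nonempty := by
          obtain ⟨i, hi⟩ := hbox
          exact ⟨i, by simp [hi]⟩
        obtain ⟨i₀, hmem, hlow⟩ := Finset.exists_min_image
          (Finset.filter (fun i => β i ≤ e i) Finset.univ) id hs
        rw [Finset.mem_filter] at hmem
        have hi₀ : β i₀ ≤ e i₀ := hmem.2
        have hlow' : ∀ j, β j ≤ e j → i₀ ≤ j := by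
          intro j hj
          exact hlow j (by simp [hj])
        have hmin : ∀ j, j < i₀ → e j < β j := by
          intro j hj
          by_contra hc
          push_neg at hc
          exact absurd hj (not_lt.mpr (hlow' j hc))
        symm
        rw [Finset.sum_eq_single_of_mem i₀ (Finset.mem_univ i₀)]
        · rw [X_pow_eq, MvPowerSeries.coeff_monomial_mul,
            if_pos (Finsupp.single_le_iff.mpr hi₀), one_mul, coeff_ofFun]
          rw [if_pos, tsub_add_cancel_of_le (Finsupp.single_le_iff.mpr hi₀)]
          intro j hj
          rw [Finsupp.tsub_apply, Finsupp.single_eq_of_ne (ne_of_lt hj), Nat.sub_zero]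
          exact hmin j hj
        · intro i _ hne
          rw [X_pow_eq, MvPowerSeries.coeff_monomial_mul]
          split_ifs with hle
          · rw [one_mul, coeff_ofFun, if_neg]
            intro hall
            have hlt : i₀ < i :=
              lt_of_le_of_ne (hlow' i (Finsupp.single_le_iff.mp hle)) (Ne.symm hne)
            have := hall i₀ hlt
            rw [Finsupp.tsub_apply, Finsupp.single_eq_of_ne hne.symm, Nat.sub_zero] at this
            exact absurd this (not_lt.mpr hi₀)
          · rfl
    rw [key]
    exact Ideal.sum_mem _ fun i _ =>
      Ideal.mul_mem_right _ _ (Ideal.subset_span ⟨i, rfl⟩)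

/-- The dimension of the quotient by the monomial ideal. -/
lemma finrank_quot {n : ℕ} (β : Fin n → ℕ) :
    Module.finrank ℂ (MvPowerSeries (Fin n) ℂ ⧸
      Ideal.span (Set.range fun i =>
        (MvPowerSeries.X i : MvPowerSeries (Fin n) ℂ) ^ (β i))) = ∏ i, β i := by
  classical
  set J := Ideal.span (Set.range fun i =>
      (MvPowerSeries.X i : MvPowerSeries (Fin n) ℂ) ^ (β i)) with hJ
  let eF : (∀ i, Fin (β i)) → (Fin n →₀ ℕ) :=
    fun v => Finsupp.equivFunOnFinite.symm (fun i => (v i : ℕ))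
  have heF : ∀ v i, eF v i = (v i : ℕ) := fun v i => rfl
  have heF_inj : Function.Injective eF := by
    intro v w h
    funext i
    exact Fin.ext (by rw [← heF v i, ← heF w i, h])
  let π : MvPowerSeries (Fin n) ℂ →ₗ[ℂ] ((∀ i, Fin (β i)) → ℂ) :=
    { toFun := fun g v => MvPowerSeries.coeff (eF v) g
      map_add' := fun a b => funext fun v => map_add _ _ _
      map_smul' := fun c a => funext fun v => map_smul _ _ _ }
  have hπ : ∀ g v, π g v = MvPowerSeries.coeff (eF v) g := fun _ _ => rfl
  have hker : LinearMap.ker π = J.restrictScalars ℂ := by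
    ext g
    rw [LinearMap.mem_ker, Submodule.restrictScalars_mem, hJ, mem_span_iff, funext_iff]
    constructor
    · intro h e he
      have := h (fun i => ⟨e i, he i⟩)
      rw [hπ] at this
      have heq : eF (fun i => ⟨e i, he i⟩) = e := by
        ext i
        rw [heF]
      rwa [heq] at this
    · intro h v
      rw [hπ]
      exact h (eF v) (fun i => by rw [heF]; exact (v i).isLt)
  have hsurj : Function.Surjective π := by
    intro c
    refine ⟨∑ v : (∀ i, Fin (β i)), MvPowerSeries.monomial (eF v) (c v), ?_⟩
    funext v'
    rw [hπ, map_sum, Finset.sum_eq_single v']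
    · rw [MvPowerSeries.coeff_monomial_same]
    · intro v _ hv
      refine MvPowerSeries.coeff_monomial_ne ?_ _
      intro h
      exact hv (heF_inj h.symm)
    · intro h
      exact absurd (Finset.mem_univ _) h
  have e2 : (MvPowerSeries (Fin n) ℂ ⧸ J) ≃ₗ[ℂ] ((∀ i, Fin (β i)) → ℂ) :=
    ((Submodule.Quotient.restrictScalarsEquiv ℂ J).symm.trans
      (Submodule.quotEquivOfEq _ _ hker.symm)).trans
      (LinearMap.quotKerEquivOfSurjective π hsurj)
  rw [e2.finrank_eq, Module.finrank_fintype_fun_eq_card, Fintype.card_pi]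
  simp

end TjurinaAux

/-- For f = Σᵢ xᵢ^{αᵢ} + Σᵢ λᵢ xᵢ^d with 2 ≤ αᵢ ≤ d and αᵢ + d·λᵢ ≠ 0 whenever αᵢ = d,
the Tjurina ideal of f equals the monomial ideal ⟨x₁^{α₁−1}, …, xₙ^{αₙ−1}⟩ and the
Tjurina number is τ(f) = Πᵢ (αᵢ − 1). -/
theorem statement_11 {n : ℕ} (hn : 1 ≤ n) (α : Fin n → ℕ) (d : ℕ)
    (hα2 : ∀ i, 2 ≤ α i) (hαd : ∀ i, α i ≤ d)
    (lam : Fin n → ℂ) (hlam : ∀ i, α i = d → (α i : ℂ) + d * lam i ≠ 0)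
    (f : MvPolynomial (Fin n) ℂ)
    (hf : f = ∑ i, X i ^ α i + ∑ i, C (lam i) * X i ^ d) :
    tjurinaIdeal f =
      Ideal.span (Set.range fun i => (MvPowerSeries.X i : MvPowerSeries (Fin n) ℂ) ^ (α i - 1)) ∧
    Module.finrank ℂ (TjurinaAlgebra f) = ∏ i, (α i - 1) := by
  classical
  set J := Ideal.span (Set.range fun i =>
      (MvPowerSeries.X i : MvPowerSeries (Fin n) ℂ) ^ (α i - 1)) with hJ
  -- the partial derivatives
  have hpd : ∀ i, pderiv i f =
      C ((α i : ℂ)) * X i ^ (α i - 1) + C ((d : ℂ) * lam i) * X i ^ (d - 1) := by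
    intro i
    rw [hf, map_add, map_sum, map_sum]
    have h1 : ∑ j, pderiv i (X j ^ α j) = C ((α i : ℂ)) * X i ^ (α i - 1) := by
      rw [Finset.sum_eq_single i]
      · rw [pderiv_pow, pderiv_X_self, mul_one, C_eq_coe_nat]
      · intro j _ hj
        rw [pderiv_pow, pderiv_X_of_ne hj, mul_zero]
      · intro h
        exact absurd (Finset.mem_univ _) h
    have h2 : ∑ j, pderiv i (C (lam j) * X j ^ d) = C ((d : ℂ) * lam i) * X i ^ (d - 1) := by
      rw [Finset.sum_eq_single i]
      · rw [pderiv_C_mul, pderiv_pow, pderiv_X_self, mul_one, ← C_eq_coe_nat, C_mul]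
        ring
      · intro j _ hj
        rw [pderiv_C_mul, pderiv_pow, pderiv_X_of_ne hj, mul_zero, mul_zero]
      · intro h
        exact absurd (Finset.mem_univ _) h
    rw [h1, h2]
  -- the derivative as a power series: X_i^{α_i - 1} * u_i
  set u : Fin n → MvPowerSeries (Fin n) ℂ := fun i =>
    MvPowerSeries.C (σ := Fin n) (R := ℂ) (α i) + MvPowerSeries.C (σ := Fin n) (R := ℂ) ((d : ℂ) * lam i) *
      (MvPowerSeries.X i) ^ (d - α i) with hu_def
  have hP : ∀ i, ((pderiv i f : MvPolynomial (Fin n) ℂ) : MvPowerSeries (Fin n) ℂ) =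
      (MvPowerSeries.X i : MvPowerSeries (Fin n) ℂ) ^ (α i - 1) * u i := by
    intro i
    rw [hpd i]
    have hXd : (MvPowerSeries.X i : MvPowerSeries (Fin n) ℂ) ^ (d - 1) =
        (MvPowerSeries.X i) ^ (α i - 1) * (MvPowerSeries.X i) ^ (d - α i) := by
      rw [← pow_add]
      congr 1
      have h1 := hα2 i
      have h2 := hαd i
      omega
    simp only [MvPolynomial.coe_add, MvPolynomial.coe_mul, MvPolynomial.coe_pow,
      MvPolynomial.coe_C, MvPolynomial.coe_X]
    rw [hXd]
    simp only [hu_def]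
    ring
  -- each u_i is a unit
  have hu : ∀ i, IsUnit (u i) := by
    intro i
    rw [MvPowerSeries.isUnit_iff_constantCoeff]
    rw [isUnit_iff_ne_zero]
    simp only [hu_def]
    simp only [map_add, map_mul, map_pow, MvPowerSeries.constantCoeff_C,
      MvPowerSeries.constantCoeff_X]
    by_cases hcase : α i = d
    · rw [show d - α i = 0 by omega, pow_zero, mul_one]
      exact hlam i hcase
    · rw [zero_pow (by have := hαd i; omega), mul_zero, add_zero]
      have : α i ≠ 0 := by have := hα2 i; omega
      exact Nat.cast_ne_zero.mpr this
  -- generators of J lie in the Tjurina ideal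
  have hJle : J ≤ tjurinaIdeal f := by
    rw [hJ, Ideal.span_le]
    rintro _ ⟨i, rfl⟩
    show (MvPowerSeries.X i : MvPowerSeries (Fin n) ℂ) ^ (α i - 1) ∈ tjurinaIdeal f
    obtain ⟨v, hv⟩ := hu i
    have h1 : ((pderiv i f : MvPolynomial (Fin n) ℂ) : MvPowerSeries (Fin n) ℂ) ∈
        tjurinaIdeal f :=
      Ideal.subset_span (Set.mem_insert_iff.mpr (Or.inr ⟨i, rfl⟩))
    have h2 : (MvPowerSeries.X i : MvPowerSeries (Fin n) ℂ) ^ (α i - 1) =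
        ((pderiv i f : MvPolynomial (Fin n) ℂ) : MvPowerSeries (Fin n) ℂ) * ↑v⁻¹ := by
      rw [hP i, mul_assoc, ← hv, Units.mul_inv, mul_one]
    rw [h2]
    exact Ideal.mul_mem_right _ _ h1
  -- the Tjurina ideal is contained in J
  have hleJ : tjurinaIdeal f ≤ J := by
    rw [tjurinaIdeal, Ideal.span_le]
    rw [Set.insert_subset_iff]
    constructor
    · -- f itself lies in J
      have hfc : (↑f : MvPowerSeries (Fin n) ℂ) =
          ∑ i, (MvPowerSeries.X i : MvPowerSeries (Fin n) ℂ) ^ (α i) +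
            ∑ i, MvPowerSeries.C (lam i) * (MvPowerSeries.X i) ^ d := by
        rw [hf, ← MvPolynomial.coeToMvPowerSeries.ringHom_apply, map_add, map_sum, map_sum]
        simp [MvPolynomial.coeToMvPowerSeries.ringHom_apply]
      rw [SetLike.mem_coe, hfc]
      refine Ideal.add_mem _ (Ideal.sum_mem _ fun i _ => ?_) (Ideal.sum_mem _ fun i _ => ?_)
      · have h3 : (MvPowerSeries.X i : MvPowerSeries (Fin n) ℂ) ^ (α i) =
            (MvPowerSeries.X i) ^ (α i - 1) * (MvPowerSeries.X i) := by
          rw [← pow_succ]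
          congr 1
          have := hα2 i
          omega
        rw [h3]
        exact Ideal.mul_mem_right _ _ (Ideal.subset_span ⟨i, rfl⟩)
      · have h3 : (MvPowerSeries.X i : MvPowerSeries (Fin n) ℂ) ^ d =
            (MvPowerSeries.X i) ^ (α i - 1) * (MvPowerSeries.X i) ^ (d - (α i - 1)) := by
          rw [← pow_add]
          congr 1
          have h1 := hα2 i
          have h2 := hαd i
          omega
        rw [h3]
        refine Ideal.mul_mem_left _ _ (Ideal.mul_mem_right _ _ ?_)
        exact Ideal.subset_span ⟨i, rfl⟩
    · rintro _ ⟨i, rfl⟩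
      show ((pderiv i f : MvPolynomial (Fin n) ℂ) : MvPowerSeries (Fin n) ℂ) ∈ J
      rw [hP i]
      exact Ideal.mul_mem_right _ _ (Ideal.subset_span ⟨i, rfl⟩)
  have hmain : tjurinaIdeal f = J := le_antisymm hleJ hJle
  refine ⟨hmain, ?_⟩
  have hfr := TjurinaAux.finrank_quot (fun i => α i - 1)
  rw [← hJ] at hfr
  have hEq : Module.finrank ℂ (TjurinaAlgebra f) =
      Module.finrank ℂ (MvPowerSeries (Fin n) ℂ ⧸ J) := by
    unfold TjurinaAlgebra
    rw [hmain]
  rw [hEq]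
  exact hfr
end
end

section
/- Let n ≥ 1, let α₁,…,αₙ and d be integers with 2 ≤ αᵢ ≤ d for all i, and let λ₁,…,λₙ ∈ ℂ satisfy αᵢ + d·λᵢ ≠ 0 for every i with αᵢ = d. Then the polynomial f := Σᵢ xᵢ^{αᵢ} + Σᵢ λᵢ·xᵢ^d is contact equivalent in ℂ[[x₁,…,xₙ]] to the canonical quasihomogeneous polynomial Σᵢ xᵢ^{αᵢ}. -/
open MvPolynomial

noncomputable section

namespace CEaux

open MvPowerSeries Finsupp

variable {n : ℕ} (h : Fin n → MvPowerSeries (Fin n) ℂ)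

/-- product of the `h i ^ e i` -/
def Hh (e : Fin n →₀ ℕ) : MvPowerSeries (Fin n) ℂ := ∏ i, (h i) ^ (e i)

lemma Hh_zero : Hh h 0 = 1 := by simp [Hh]

lemma Hh_add (e e' : Fin n →₀ ℕ) : Hh h (e + e') = Hh h e * Hh h e' := by
  simp [Hh, pow_add, Finset.prod_mul_distrib]

/-- the substitution map `X i ↦ X i * h i`, defined coefficientwise -/
def sub (F : MvPowerSeries (Fin n) ℂ) : MvPowerSeries (Fin n) ℂ :=
  fun m => ∑ e ∈ Finset.Iic m,
    MvPowerSeries.coeff e F * MvPowerSeries.coeff (m - e) (Hh h e)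

lemma coeff_sub (F : MvPowerSeries (Fin n) ℂ) (m : Fin n →₀ ℕ) :
    MvPowerSeries.coeff m (sub h F) = ∑ e ∈ Finset.Iic m,
      MvPowerSeries.coeff e F * MvPowerSeries.coeff (m - e) (Hh h e) := rfl

lemma sub_congr {F G : MvPowerSeries (Fin n) ℂ} {m : Fin n →₀ ℕ}
    (hFG : ∀ e ≤ m, MvPowerSeries.coeff e F = MvPowerSeries.coeff e G) :
    MvPowerSeries.coeff m (sub h F) = MvPowerSeries.coeff m (sub h G) := by
  rw [coeff_sub, coeff_sub]
  exact Finset.sum_congr rfl fun e he => by rw [hFG e (Finset.mem_Iic.mp he)]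

lemma sub_add (F G : MvPowerSeries (Fin n) ℂ) :
    sub h (F + G) = sub h F + sub h G := by
  ext m
  simp only [map_add, coeff_sub, add_mul, Finset.sum_add_distrib]

lemma sub_monomial (e : Fin n →₀ ℕ) (c : ℂ) :
    sub h (MvPowerSeries.monomial e c) = MvPowerSeries.monomial e c * Hh h e := by
  ext m
  rw [coeff_sub, MvPowerSeries.coeff_monomial_mul]
  classical
  by_cases hem : e ≤ m
  · rw [if_pos hem, Finset.sum_eq_single e]
    · rw [MvPowerSeries.coeff_monomial_same]
    · intro b _ hbe
      rw [MvPowerSeries.coeff_monomial_ne hbe, zero_mul]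
    · intro hc; exact absurd (Finset.mem_Iic.mpr hem) hc
  · rw [if_neg hem]
    apply Finset.sum_eq_zero
    intro b hb
    rw [MvPowerSeries.coeff_monomial_ne, zero_mul]
    rintro rfl; exact hem (Finset.mem_Iic.mp hb)


lemma prod_X_pow (e : Fin n →₀ ℕ) :
    (∏ i, (MvPowerSeries.X i : MvPowerSeries (Fin n) ℂ) ^ (e i))
      = MvPowerSeries.monomial e 1 := by
  simp_rw [MvPowerSeries.X_pow_eq]
  rw [show (MvPowerSeries.monomial e (1:ℂ))
      = MvPowerSeries.monomial (∑ i, Finsupp.single i (e i)) 1 by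
    rw [Finsupp.univ_sum_single]]
  induction (Finset.univ : Finset (Fin n)) using Finset.induction_on with
  | empty => simp
  | insert x s hx ih =>
      rw [Finset.prod_insert hx, Finset.sum_insert hx, ih,
        MvPowerSeries.monomial_mul_monomial, one_mul]

lemma sub_coe (P : MvPolynomial (Fin n) ℂ) :
    sub h (P : MvPowerSeries (Fin n) ℂ)
      = MvPolynomial.aeval (fun i => (MvPowerSeries.X i : MvPowerSeries (Fin n) ℂ) * h i) P := by
  induction P using MvPolynomial.induction_on' with
  | add p q hp hq => rw [MvPolynomial.coe_add, sub_add, hp, hq, map_add]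
  | monomial e c =>
      rw [MvPolynomial.coe_monomial, sub_monomial, MvPolynomial.aeval_monomial]
      rw [Finsupp.prod_fintype _ _ (fun i => pow_zero _)]
      simp_rw [mul_pow]
      rw [Finset.prod_mul_distrib, prod_X_pow]
      rw [show (algebraMap ℂ (MvPowerSeries (Fin n) ℂ)) c = MvPowerSeries.C c from rfl]
      rw [← mul_assoc]
      congr 1
      rw [show (MvPowerSeries.C c) = MvPowerSeries.monomial 0 c from rfl,
        MvPowerSeries.monomial_mul_monomial, zero_add, mul_one]


/-- truncation of a power series to a polynomial keeping exponents `≤ m` -/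
def ptrunc (m : Fin n →₀ ℕ) (F : MvPowerSeries (Fin n) ℂ) : MvPolynomial (Fin n) ℂ :=
  ∑ e ∈ Finset.Iic m, MvPolynomial.monomial e (MvPowerSeries.coeff e F)

lemma coeff_ptrunc (m : Fin n →₀ ℕ) (F : MvPowerSeries (Fin n) ℂ) (e : Fin n →₀ ℕ) :
    MvPowerSeries.coeff e ((ptrunc m F : MvPolynomial (Fin n) ℂ) : MvPowerSeries (Fin n) ℂ)
      = if e ≤ m then MvPowerSeries.coeff e F else 0 := by
  classical
  rw [MvPolynomial.coeff_coe, ptrunc, MvPolynomial.coeff_sum]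
  simp_rw [MvPolynomial.coeff_monomial]
  rw [Finset.sum_ite_eq']
  simp [Finset.mem_Iic]

lemma sub_mul (F G : MvPowerSeries (Fin n) ℂ) :
    sub h (F * G) = sub h F * sub h G := by
  ext m
  set P := ptrunc m F with hPdef
  set Q := ptrunc m G with hQdef
  have hP : ∀ e ≤ m, MvPowerSeries.coeff e (P : MvPowerSeries (Fin n) ℂ)
      = MvPowerSeries.coeff e F := fun e he => by rw [coeff_ptrunc, if_pos he]
  have hQ : ∀ e ≤ m, MvPowerSeries.coeff e (Q : MvPowerSeries (Fin n) ℂ)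
      = MvPowerSeries.coeff e G := fun e he => by rw [coeff_ptrunc, if_pos he]
  have key : ∀ e ≤ m, MvPowerSeries.coeff e ((↑(P * Q) : MvPowerSeries (Fin n) ℂ))
      = MvPowerSeries.coeff e (F * G) := by
    intro e he
    classical
    rw [MvPolynomial.coe_mul, MvPowerSeries.coeff_mul, MvPowerSeries.coeff_mul]
    refine Finset.sum_congr rfl fun p hp => ?_
    rw [Finset.HasAntidiagonal.mem_antidiagonal] at hp
    have h1 : p.1 ≤ m := le_trans (hp ▸ le_self_add) he
    have h2 : p.2 ≤ m := le_trans (hp ▸ le_add_self) he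
    rw [hP p.1 h1, hQ p.2 h2]
  calc
    MvPowerSeries.coeff m (sub h (F * G))
        = MvPowerSeries.coeff m (sub h ((↑(P * Q) : MvPowerSeries (Fin n) ℂ))) :=
      sub_congr h fun e he => (key e he).symm
    _ = MvPowerSeries.coeff m
        (MvPolynomial.aeval (fun i => (MvPowerSeries.X i : MvPowerSeries (Fin n) ℂ) * h i)
          (P * Q)) := by rw [sub_coe]
    _ = MvPowerSeries.coeff m
        ((sub h (P : MvPowerSeries (Fin n) ℂ)) * (sub h (Q : MvPowerSeries (Fin n) ℂ))) := by
      rw [map_mul, sub_coe, sub_coe]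
    _ = MvPowerSeries.coeff m (sub h F * sub h G) := by
      classical
      rw [MvPowerSeries.coeff_mul, MvPowerSeries.coeff_mul]
      refine Finset.sum_congr rfl fun p hp => ?_
      rw [Finset.HasAntidiagonal.mem_antidiagonal] at hp
      have h1 : p.1 ≤ m := hp ▸ le_self_add
      have h2 : p.2 ≤ m := hp ▸ le_add_self
      rw [sub_congr h (fun e he => hP e (le_trans he h1)),
        sub_congr h (fun e he => hQ e (le_trans he h2))]

/-- the substitution algebra homomorphism -/
def subA : MvPowerSeries (Fin n) ℂ →ₐ[ℂ] MvPowerSeries (Fin n) ℂ where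
  toFun := sub h
  map_one' := by
    show sub h 1 = 1
    conv_lhs => rw [← MvPolynomial.coe_one]
    rw [sub_coe, map_one]
  map_mul' := sub_mul h
  map_zero' := by
    ext m; rw [coeff_sub]
    exact Finset.sum_eq_zero fun e _ => by rw [map_zero, zero_mul]
  map_add' := sub_add h
  commutes' := fun c => by
    have hc : (algebraMap ℂ (MvPowerSeries (Fin n) ℂ)) c
        = ((MvPolynomial.C c : MvPolynomial (Fin n) ℂ) : MvPowerSeries (Fin n) ℂ) := by
      rw [MvPowerSeries.algebraMap_apply, MvPolynomial.coe_C]; simp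
    show sub h _ = _
    rw [hc, sub_coe, MvPolynomial.aeval_C, hc]

lemma subA_apply (F : MvPowerSeries (Fin n) ℂ) : subA h F = sub h F := rfl

lemma subA_X (i : Fin n) :
    subA h (MvPowerSeries.X i) = MvPowerSeries.X i * h i := by
  rw [subA_apply, ← MvPolynomial.coe_X, sub_coe, MvPolynomial.aeval_X, MvPolynomial.coe_X]


/-! ### Bijectivity -/

def deg (m : Fin n →₀ ℕ) : ℕ := ∑ i, m i

lemma deg_lt {e m : Fin n →₀ ℕ} (hle : e ≤ m) (hne : e ≠ m) : deg e < deg m := by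
  have hpt : ∀ i, e i ≤ m i := fun i => Finsupp.le_def.mp hle i
  obtain ⟨i, hi⟩ : ∃ i, e i ≠ m i := by
    by_contra hc
    push_neg at hc
    exact hne (Finsupp.ext hc)
  exact Finset.sum_lt_sum (fun i _ => hpt i)
    ⟨i, Finset.mem_univ i, lt_of_le_of_ne (hpt i) hi⟩

/-- the "diagonal entry" of the substitution in coefficient coordinates -/
def cc (m : Fin n →₀ ℕ) : ℂ :=
  ∏ i, (MvPowerSeries.constantCoeff (h i)) ^ (m i)

lemma cc_ne (hb : ∀ i, MvPowerSeries.constantCoeff (h i) ≠ 0) (m : Fin n →₀ ℕ) :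
    cc h m ≠ 0 :=
  Finset.prod_ne_zero_iff.mpr fun i _ => pow_ne_zero _ (hb i)

lemma constantCoeff_Hh (m : Fin n →₀ ℕ) :
    MvPowerSeries.constantCoeff (Hh h m) = cc h m := by
  rw [Hh, cc, map_prod]
  exact Finset.prod_congr rfl fun i _ => map_pow _ _ _

lemma coeff_sub_split (F : MvPowerSeries (Fin n) ℂ) (m : Fin n →₀ ℕ) :
    MvPowerSeries.coeff m (sub h F)
      = cc h m * MvPowerSeries.coeff m F
        + ∑ e ∈ Finset.Iic m \ {m},
            MvPowerSeries.coeff e F * MvPowerSeries.coeff (m - e) (Hh h e) := by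
  classical
  rw [coeff_sub, Finset.sum_eq_sum_sdiff_singleton_add (Finset.mem_Iic.mpr (le_refl m))]
  rw [tsub_self, MvPowerSeries.coeff_zero_eq_constantCoeff, constantCoeff_Hh, mul_comm, add_comm]

lemma sub_injective (hb : ∀ i, MvPowerSeries.constantCoeff (h i) ≠ 0) :
    Function.Injective (subA h) := by
  rw [injective_iff_map_eq_zero]
  intro F hF
  have key : ∀ k, ∀ m : Fin n →₀ ℕ, deg m ≤ k → MvPowerSeries.coeff m F = 0 := by
    intro k
    induction k using Nat.strong_induction_on with
    | _ k IH =>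
      intro m hm
      have h0 : MvPowerSeries.coeff m (sub h F) = 0 := by
        rw [show sub h F = 0 from hF]; simp
      rw [coeff_sub_split] at h0
      have hz : ∀ e ∈ Finset.Iic m \ {m}, MvPowerSeries.coeff e F
          * MvPowerSeries.coeff (m - e) (Hh h e) = 0 := by
        intro e he
        rw [Finset.mem_sdiff, Finset.mem_Iic, Finset.mem_singleton] at he
        have hlt : deg e < deg m := deg_lt he.1 he.2
        rcases Nat.eq_zero_or_pos k with hk | hk
        · omega
        · rw [IH (deg e) (by omega) e le_rfl, zero_mul]
      rw [Finset.sum_eq_zero hz, add_zero] at h0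
      exact (mul_eq_zero.mp h0).resolve_left (cc_ne h hb m)
  ext m
  rw [key (deg m) m le_rfl, map_zero]

/-- well-founded recursive solution of the triangular system -/
def solveFun (hb : ∀ i, MvPowerSeries.constantCoeff (h i) ≠ 0)
    (G : MvPowerSeries (Fin n) ℂ) : MvPowerSeries (Fin n) ℂ := fun m =>
  (measure deg).wf.fix
    (fun m IH => (cc h m)⁻¹ * (MvPowerSeries.coeff m G -
      ∑ e ∈ (Finset.Iic m \ {m}).attach,
        IH e.1 (deg_lt (Finset.mem_Iic.mp (Finset.mem_sdiff.mp e.2).1)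
          (fun hh => (Finset.mem_sdiff.mp e.2).2 (Finset.mem_singleton.mpr hh)))
          * MvPowerSeries.coeff (m - e.1) (Hh h e.1))) m

lemma sub_surjective (hb : ∀ i, MvPowerSeries.constantCoeff (h i) ≠ 0) :
    Function.Surjective (subA h) := by
  intro G
  refine ⟨solveFun h hb G, ?_⟩
  ext m
  rw [subA_apply, coeff_sub_split]
  have hfix : MvPowerSeries.coeff m (solveFun h hb G)
      = (cc h m)⁻¹ * (MvPowerSeries.coeff m G -
          ∑ e ∈ Finset.Iic m \ {m},
            MvPowerSeries.coeff e (solveFun h hb G)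
              * MvPowerSeries.coeff (m - e) (Hh h e)) := by
    show solveFun h hb G m = _
    rw [solveFun, WellFounded.fix_eq]
    rw [← Finset.sum_attach (Finset.Iic m \ {m})
      (fun e => MvPowerSeries.coeff e (solveFun h hb G)
        * MvPowerSeries.coeff (m - e) (Hh h e))]
    rfl
  rw [hfix, mul_inv_cancel_left₀ (cc_ne h hb m), sub_add_cancel]

/-- the substitution algebra automorphism -/
def subE (hb : ∀ i, MvPowerSeries.constantCoeff (h i) ≠ 0) :
    MvPowerSeries (Fin n) ℂ ≃ₐ[ℂ] MvPowerSeries (Fin n) ℂ :=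
  AlgEquiv.ofBijective (subA h) ⟨sub_injective h hb, sub_surjective h hb⟩

lemma subE_X (hb : ∀ i, MvPowerSeries.constantCoeff (h i) ≠ 0) (i : Fin n) :
    subE h hb (MvPowerSeries.X i) = MvPowerSeries.X i * h i := subA_X h i


/-! ### One-variable binomial series: an `α`-th root of `1 + λ X` -/

section OneVar

open PowerSeries

/-- coefficients of the binomial series `(1 + λ X)^q` -/
def rr (lam q : ℂ) : ℕ → ℂ
  | 0 => 1
  | k + 1 => rr lam q k * lam * (q - k) / (k + 1)

/-- the binomial series -/
def bb (lam q : ℂ) : PowerSeries ℂ := PowerSeries.mk (rr lam q)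

/-- the coefficient recursion satisfied by any solution of the ODE
`(1 + λ X) y' = (λ q) y`. -/
lemma ode_coeff {lam q : ℂ} {y : PowerSeries ℂ}
    (hy : (1 + PowerSeries.C lam * PowerSeries.X) * (d⁄dX ℂ y)
      = PowerSeries.C (lam * q) * y) (k : ℕ) :
    (k + 1 : ℂ) * PowerSeries.coeff (k + 1) y
      = (lam * q - lam * k) * PowerSeries.coeff k y := by
  have hk := congrArg (PowerSeries.coeff k) hy
  rw [add_mul, one_mul, map_add, PowerSeries.coeff_C_mul, mul_assoc,
    PowerSeries.coeff_C_mul] at hk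
  rcases k with _ | k
  · rw [PowerSeries.coeff_zero_X_mul, mul_zero, add_zero, PowerSeries.coeff_derivative] at hk
    push_cast at hk ⊢
    linear_combination hk
  · rw [PowerSeries.coeff_succ_X_mul, PowerSeries.coeff_derivative,
      PowerSeries.coeff_derivative] at hk
    push_cast at hk ⊢
    linear_combination hk

/-- uniqueness for the ODE -/
lemma ode_unique {lam q : ℂ} {y z : PowerSeries ℂ}
    (hy : (1 + PowerSeries.C lam * PowerSeries.X) * (d⁄dX ℂ y)
      = PowerSeries.C (lam * q) * y)
    (hz : (1 + PowerSeries.C lam * PowerSeries.X) * (d⁄dX ℂ z)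
      = PowerSeries.C (lam * q) * z)
    (h0 : PowerSeries.constantCoeff y = PowerSeries.constantCoeff z) : y = z := by
  ext k
  induction k with
  | zero =>
      rw [PowerSeries.coeff_zero_eq_constantCoeff_apply,
        PowerSeries.coeff_zero_eq_constantCoeff_apply, h0]
  | succ k ih =>
      have h1 := ode_coeff hy k
      have h2 := ode_coeff hz k
      have hne : ((k : ℂ) + 1) ≠ 0 := Nat.cast_add_one_ne_zero k
      have : ((k : ℂ) + 1) * PowerSeries.coeff (k + 1) y
          = ((k : ℂ) + 1) * PowerSeries.coeff (k + 1) z := by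
        rw [h1, h2, ih]
      exact mul_left_cancel₀ hne this

lemma bb_ode (lam q : ℂ) :
    (1 + PowerSeries.C lam * PowerSeries.X) * (d⁄dX ℂ (bb lam q))
      = PowerSeries.C (lam * q) * bb lam q := by
  ext k
  rw [add_mul, one_mul, map_add, PowerSeries.coeff_C_mul, mul_assoc, PowerSeries.coeff_C_mul]
  rcases k with _ | k
  · rw [PowerSeries.coeff_zero_X_mul, mul_zero, add_zero, PowerSeries.coeff_derivative]
    simp only [bb, PowerSeries.coeff_mk]
    norm_num [rr]
  · rw [PowerSeries.coeff_succ_X_mul, PowerSeries.coeff_derivative, PowerSeries.coeff_derivative]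
    simp only [bb, PowerSeries.coeff_mk]
    rw [show rr lam q (k + 1 + 1)
        = rr lam q (k + 1) * lam * (q - (k + 1 : ℕ)) / ((k + 1 : ℕ) + 1) from rfl]
    have hne : ((k + 1 : ℕ) : ℂ) + 1 ≠ 0 := Nat.cast_add_one_ne_zero (k + 1)
    rw [div_mul_cancel₀ _ hne]
    push_cast
    ring

lemma constantCoeff_bb (lam q : ℂ) : PowerSeries.constantCoeff (bb lam q) = 1 := by
  rw [bb, PowerSeries.constantCoeff_mk]; rfl

/-- the main root property : `bb lam (1/α) ^ α = 1 + λ X` -/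
lemma bb_pow {α : ℕ} (hα : 1 ≤ α) (lam : ℂ) :
    (bb lam ((α : ℂ)⁻¹)) ^ α = 1 + PowerSeries.C lam * PowerSeries.X := by
  have hαC : (α : ℂ) ≠ 0 := Nat.cast_ne_zero.mpr (by omega)
  set q : ℂ := (α : ℂ)⁻¹ with hqdef
  set b := bb lam q with hbdef
  have hpow : b ^ (α - 1) * b = b ^ α := by
    rw [← pow_succ]
    congr 1
    omega
  have hy : (1 + PowerSeries.C lam * PowerSeries.X) * (d⁄dX ℂ (b ^ α))
      = PowerSeries.C (lam * 1) * b ^ α := by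
    rw [Derivation.leibniz_pow, nsmul_eq_mul, smul_eq_mul]
    calc (1 + PowerSeries.C lam * PowerSeries.X)
          * ((α : ℂ⟦X⟧) * (b ^ (α - 1) * d⁄dX ℂ b))
        = (α : ℂ⟦X⟧) * (b ^ (α - 1)
            * ((1 + PowerSeries.C lam * PowerSeries.X) * d⁄dX ℂ b)) := by ring
      _ = (α : ℂ⟦X⟧) * (b ^ (α - 1) * (PowerSeries.C (lam * q) * b)) := by rw [bb_ode]
      _ = ((α : ℂ⟦X⟧) * PowerSeries.C (lam * q)) * (b ^ (α - 1) * b) := by ring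
      _ = PowerSeries.C (lam * 1) * b ^ α := by
          rw [hpow]
          congr 1
          rw [← map_natCast (PowerSeries.C (R := ℂ)) α, ← map_mul]
          congr 1
          rw [hqdef]; field_simp
  have hz : (1 + PowerSeries.C lam * PowerSeries.X)
      * (d⁄dX ℂ (1 + PowerSeries.C lam * PowerSeries.X))
      = PowerSeries.C (lam * 1) * (1 + PowerSeries.C lam * PowerSeries.X) := by
    rw [map_add, Derivation.map_one_eq_zero, zero_add, Derivation.leibniz,
      PowerSeries.derivative_X, PowerSeries.derivative_C, smul_zero, add_zero, smul_eq_mul,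
      mul_one, mul_one]
    ring
  refine ode_unique hy hz ?_
  rw [map_pow, constantCoeff_bb, one_pow, map_add, map_mul, PowerSeries.constantCoeff_one,
    PowerSeries.constantCoeff_C, PowerSeries.constantCoeff_X, mul_zero, add_zero]

end OneVar

/-! ### Monomial substitution `ℂ⟦t⟧ → ℂ⟦x⟧`, `t ↦ X i ^ β` -/

section Psi

open scoped Classical

variable {n : ℕ}

/-- substitute `X i ^ β` for the variable of a one-variable power series -/
def psi (i : Fin n) (β : ℕ) (F : PowerSeries ℂ) : MvPowerSeries (Fin n) ℂ := fun m =>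
  if m = Finsupp.single i (m i) ∧ β ∣ m i then PowerSeries.coeff (m i / β) F else 0

lemma coeff_psi (i : Fin n) (β : ℕ) (F : PowerSeries ℂ) (m : Fin n →₀ ℕ) :
    MvPowerSeries.coeff m (psi i β F)
      = if m = Finsupp.single i (m i) ∧ β ∣ m i
          then PowerSeries.coeff (m i / β) F else 0 := rfl

lemma coeff_psi_single (i : Fin n) {β : ℕ} (hβ : 1 ≤ β) (F : PowerSeries ℂ) (k : ℕ) :
    MvPowerSeries.coeff (Finsupp.single i (β * k)) (psi i β F)
      = PowerSeries.coeff k F := by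
  rw [coeff_psi, if_pos]
  · rw [Finsupp.single_eq_same, Nat.mul_div_cancel_left k (by omega)]
  · constructor
    · rw [Finsupp.single_eq_same]
    · rw [Finsupp.single_eq_same]; exact Dvd.intro k rfl

lemma psi_add (i : Fin n) (β : ℕ) (F G : PowerSeries ℂ) :
    psi i β (F + G) = psi i β F + psi i β G := by
  ext m
  rw [map_add, coeff_psi, coeff_psi, coeff_psi]
  split_ifs with hc
  · rw [map_add]
  · rw [add_zero]

lemma psi_mul (i : Fin n) {β : ℕ} (hβ : 1 ≤ β) (F G : PowerSeries ℂ) :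
    psi i β (F * G) = psi i β F * psi i β G := by
  ext m
  rw [MvPowerSeries.coeff_mul]
  by_cases hm : m = Finsupp.single i (m i)
  swap
  · rw [show MvPowerSeries.coeff m (psi i β (F * G)) = 0 by
      rw [coeff_psi, if_neg]; rintro ⟨h1, -⟩; exact hm h1]
    symm
    apply Finset.sum_eq_zero
    rintro ⟨p, q⟩ hpq
    rw [Finset.HasAntidiagonal.mem_antidiagonal] at hpq
    by_cases hp : p = Finsupp.single i (p i) ∧ β ∣ p i
    · by_cases hq : q = Finsupp.single i (q i) ∧ β ∣ q i
      · exfalso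
        apply hm
        have hmpq : m = Finsupp.single i (p i + q i) := by
          rw [Finsupp.single_add, ← hp.1, ← hq.1]
          exact hpq.symm
        rw [hmpq, Finsupp.single_eq_same]
      · rw [coeff_psi, coeff_psi, if_neg hq, mul_zero]
    · rw [coeff_psi, if_neg hp, zero_mul]
  · by_cases hdvd : β ∣ m i
    swap
    · rw [show MvPowerSeries.coeff m (psi i β (F * G)) = 0 by
        rw [coeff_psi, if_neg]; rintro ⟨-, h2⟩; exact hdvd h2]
      symm
      apply Finset.sum_eq_zero
      rintro ⟨p, q⟩ hpq
      rw [Finset.HasAntidiagonal.mem_antidiagonal] at hpq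
      by_cases hp : p = Finsupp.single i (p i) ∧ β ∣ p i
      · by_cases hq : q = Finsupp.single i (q i) ∧ β ∣ q i
        · exfalso
          apply hdvd
          have hmi : m i = p i + q i := by rw [← hpq]; rfl
          rw [hmi]
          exact Nat.dvd_add hp.2 hq.2
        · rw [coeff_psi, coeff_psi, if_neg hq, mul_zero]
      · rw [coeff_psi, if_neg hp, zero_mul]
    · obtain ⟨K, hK⟩ := hdvd
      have hmK : m = Finsupp.single i (β * K) := by rw [hm, hK]
      subst hmK
      rw [coeff_psi_single i hβ, PowerSeries.coeff_mul]
      rw [Finsupp.antidiagonal_single, Finset.sum_map]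
      simp only [Function.Embedding.coe_prodMap, Prod.map_fst, Prod.map_snd,
        Function.Embedding.coeFn_mk]
      have hterm : ∀ p ∈ Finset.HasAntidiagonal.antidiagonal (β * K),
          (MvPowerSeries.coeff (Finsupp.single i p.1) (psi i β F))
            * (MvPowerSeries.coeff (Finsupp.single i p.2) (psi i β G))
          = if β ∣ p.1 then
              PowerSeries.coeff (p.1 / β) F * PowerSeries.coeff (p.2 / β) G
            else 0 := by
        rintro ⟨a, b⟩ hab
        rw [Finset.HasAntidiagonal.mem_antidiagonal] at hab
        rw [coeff_psi, coeff_psi]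
        simp only [Finsupp.single_eq_same, eq_self_iff_true, true_and]
        by_cases ha : β ∣ a
        · have hb : β ∣ b := by
            have hsum : β ∣ a + b := by
              rw [show a + b = β * K from hab]; exact Dvd.intro K rfl
            exact (Nat.dvd_add_right ha).mp hsum
          rw [if_pos ha, if_pos hb, if_pos ha]
        · rw [if_neg ha, zero_mul, if_neg ha]
      rw [Finset.sum_congr rfl hterm, ← Finset.sum_filter]
      symm
      refine Finset.sum_nbij' (fun p => (p.1 / β, p.2 / β)) (fun p => (β * p.1, β * p.2))
        ?_ ?_ ?_ ?_ ?_
      · rintro ⟨a, b⟩ hab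
        dsimp only
        rw [Finset.mem_filter, Finset.HasAntidiagonal.mem_antidiagonal] at hab
        rw [Finset.HasAntidiagonal.mem_antidiagonal]
        have hb : β ∣ b := by
          have hsum : β ∣ a + b := by rw [hab.1]; exact Dvd.intro K rfl
          exact (Nat.dvd_add_right hab.2).mp hsum
        obtain ⟨a', rfl⟩ := hab.2
        obtain ⟨b', rfl⟩ := hb
        rw [Nat.mul_div_cancel_left _ (by omega : 0 < β),
          Nat.mul_div_cancel_left _ (by omega : 0 < β)]
        have h1 := hab.1
        rw [← Nat.mul_add] at h1
        exact Nat.eq_of_mul_eq_mul_left (by omega) h1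
      · rintro ⟨k, l⟩ hkl
        dsimp only
        rw [Finset.HasAntidiagonal.mem_antidiagonal] at hkl
        rw [Finset.mem_filter, Finset.HasAntidiagonal.mem_antidiagonal]
        exact ⟨by rw [← Nat.mul_add, hkl], Dvd.intro k rfl⟩
      · rintro ⟨a, b⟩ hab
        rw [Finset.mem_filter, Finset.HasAntidiagonal.mem_antidiagonal] at hab
        have hb : β ∣ b := by
          have hsum : β ∣ a + b := by rw [hab.1]; exact Dvd.intro K rfl
          exact (Nat.dvd_add_right hab.2).mp hsum
        dsimp only
        simp only [Prod.mk.injEq]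
        exact ⟨Nat.mul_div_cancel' hab.2, Nat.mul_div_cancel' hb⟩
      · rintro ⟨k, l⟩ hkl
        dsimp only
        simp only [Prod.mk.injEq]
        exact ⟨Nat.mul_div_cancel_left _ (by omega), Nat.mul_div_cancel_left _ (by omega)⟩
      · rintro ⟨a, b⟩ hab
        dsimp only

lemma psi_one (i : Fin n) {β : ℕ} (hβ : 1 ≤ β) : psi i β (1 : PowerSeries ℂ) = 1 := by
  classical
  ext m
  rw [coeff_psi, MvPowerSeries.coeff_one]
  split_ifs with h1 h2 h2
  · rw [h2, PowerSeries.coeff_one]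
    norm_num
  · rw [PowerSeries.coeff_one, if_neg]
    intro hc
    apply h2
    obtain ⟨k, hk⟩ := h1.2
    have hk0 : k = 0 := by
      by_contra hk0
      rw [hk, Nat.mul_div_cancel_left k (by omega : 0 < β)] at hc
      exact hk0 hc
    rw [h1.1, hk, hk0, Nat.mul_zero, Finsupp.single_zero]
  · exfalso
    apply h1
    subst h2
    exact ⟨by rw [Finsupp.coe_zero, Pi.zero_apply, Finsupp.single_zero], by
      rw [Finsupp.coe_zero, Pi.zero_apply]; exact dvd_zero β⟩
  · rfl

lemma psi_C (i : Fin n) {β : ℕ} (hβ : 1 ≤ β) (c : ℂ) :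
    psi i β (PowerSeries.C c) = MvPowerSeries.C c := by
  classical
  ext m
  rw [coeff_psi, MvPowerSeries.coeff_C]
  split_ifs with h1 h2 h2
  · rw [h2, PowerSeries.coeff_C]
    norm_num
  · rw [PowerSeries.coeff_C, if_neg]
    intro hc
    apply h2
    obtain ⟨k, hk⟩ := h1.2
    have hk0 : k = 0 := by
      by_contra hk0
      rw [hk, Nat.mul_div_cancel_left k (by omega : 0 < β)] at hc
      exact hk0 hc
    rw [h1.1, hk, hk0, Nat.mul_zero, Finsupp.single_zero]
  · exfalso
    apply h1
    subst h2
    exact ⟨by rw [Finsupp.coe_zero, Pi.zero_apply, Finsupp.single_zero], by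
      rw [Finsupp.coe_zero, Pi.zero_apply]; exact dvd_zero β⟩
  · rfl

lemma psi_X (i : Fin n) {β : ℕ} (hβ : 1 ≤ β) :
    psi i β (PowerSeries.X : PowerSeries ℂ) = MvPowerSeries.X i ^ β := by
  classical
  ext m
  rw [coeff_psi, MvPowerSeries.X_pow_eq, MvPowerSeries.coeff_monomial]
  split_ifs with h1 h2 h2
  · rw [PowerSeries.coeff_X, if_pos]
    rw [h2, Finsupp.single_eq_same, Nat.div_self (by omega : 0 < β)]
  · rw [PowerSeries.coeff_X, if_neg]
    intro hc
    apply h2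
    have : m i = β := by
      obtain ⟨k, hk⟩ := h1.2
      rw [hk, Nat.mul_div_cancel_left k (by omega : 0 < β)] at hc
      rw [hk, hc, Nat.mul_one]
    rw [h1.1, this]
  · exfalso
    apply h1
    subst h2
    rw [Finsupp.single_eq_same]
    exact ⟨rfl, dvd_rfl⟩
  · rfl

lemma psi_pow (i : Fin n) {β : ℕ} (hβ : 1 ≤ β) (F : PowerSeries ℂ) (k : ℕ) :
    psi i β (F ^ k) = (psi i β F) ^ k := by
  induction k with
  | zero => rw [pow_zero, pow_zero, psi_one i hβ]
  | succ k ih => rw [pow_succ, pow_succ, psi_mul i hβ, ih]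

lemma constantCoeff_psi (i : Fin n) (β : ℕ) (F : PowerSeries ℂ) :
    MvPowerSeries.constantCoeff (psi i β F) = PowerSeries.constantCoeff F := by
  classical
  rw [← MvPowerSeries.coeff_zero_eq_constantCoeff_apply, coeff_psi, if_pos]
  · rw [← PowerSeries.coeff_zero_eq_constantCoeff_apply]
    congr 1
    rw [Finsupp.coe_zero, Pi.zero_apply, Nat.zero_div]
  · exact ⟨by rw [Finsupp.coe_zero, Pi.zero_apply, Finsupp.single_zero], by
      rw [Finsupp.coe_zero, Pi.zero_apply]; exact dvd_zero β⟩

end Psi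

/-! ### Existence of the needed roots -/

lemma exists_root (i : Fin n) {α d : ℕ} (hα2 : 2 ≤ α) (hαd : α ≤ d) (lam : ℂ)
    (hlam : α = d → (α : ℂ) + d * lam ≠ 0) :
    ∃ h : MvPowerSeries (Fin n) ℂ,
      MvPowerSeries.constantCoeff h ≠ 0 ∧
      h ^ α = 1 + MvPowerSeries.C lam * MvPowerSeries.X i ^ (d - α) := by
  rcases Nat.eq_or_lt_of_le hαd with heq | hlt
  · have hd0 : (d : ℂ) ≠ 0 := Nat.cast_ne_zero.mpr (by omega)
    have h1 : (1 : ℂ) + lam ≠ 0 := by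
      intro hc
      apply hlam heq
      rw [heq]
      have : (d : ℂ) + d * lam = d * (1 + lam) := by ring
      rw [this, hc, mul_zero]
    obtain ⟨c, hc⟩ := IsAlgClosed.exists_pow_nat_eq (1 + lam) (n := α) (by omega)
    refine ⟨MvPowerSeries.C c, ?_, ?_⟩
    · rw [MvPowerSeries.constantCoeff_C]
      intro h0
      rw [h0, zero_pow (by omega : α ≠ 0)] at hc
      exact h1 hc.symm
    · rw [← map_pow, hc, show d - α = 0 by omega, pow_zero, mul_one, map_add, map_one]
  · have hβ : 1 ≤ d - α := by omega
    refine ⟨psi i (d - α) (bb lam ((α : ℂ)⁻¹)), ?_, ?_⟩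
    · rw [constantCoeff_psi, constantCoeff_bb]
      exact one_ne_zero
    · rw [← psi_pow i hβ, bb_pow (by omega : 1 ≤ α) lam, psi_add, psi_one i hβ,
        psi_mul i hβ, psi_C i hβ, psi_X i hβ]

end CEaux


/-- f = Σᵢ xᵢ^{αᵢ} + Σᵢ λᵢ xᵢ^d (with 2 ≤ αᵢ ≤ d and αᵢ + d·λᵢ ≠ 0 whenever αᵢ = d) is
contact equivalent to the canonical quasihomogeneous polynomial Σᵢ xᵢ^{αᵢ}. -/
theorem statement_12 {n : ℕ} (hn : 1 ≤ n) (α : Fin n → ℕ) (d : ℕ)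
    (hα2 : ∀ i, 2 ≤ α i) (hαd : ∀ i, α i ≤ d)
    (lam : Fin n → ℂ) (hlam : ∀ i, α i = d → (α i : ℂ) + d * lam i ≠ 0)
    (f : MvPolynomial (Fin n) ℂ)
    (hf : f = ∑ i, X i ^ α i + ∑ i, C (lam i) * X i ^ d) :
    ContactEquiv (f : MvPowerSeries (Fin n) ℂ)
      ((∑ i, X i ^ α i : MvPolynomial (Fin n) ℂ) : MvPowerSeries (Fin n) ℂ) := by
  choose h hne hpow using fun i =>
    CEaux.exists_root i (hα2 i) (hαd i) (lam i) (hlam i)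
  refine ⟨CEaux.subE h hne, 1, ?_⟩
  rw [Units.val_one, one_mul]
  have hg : ((∑ i, X i ^ α i : MvPolynomial (Fin n) ℂ) : MvPowerSeries (Fin n) ℂ)
      = ∑ i, (MvPowerSeries.X i : MvPowerSeries (Fin n) ℂ) ^ α i := by
    rw [← MvPolynomial.coeToMvPowerSeries.ringHom_apply, map_sum]
    refine Finset.sum_congr rfl fun i _ => ?_
    rw [map_pow, MvPolynomial.coeToMvPowerSeries.ringHom_apply, MvPolynomial.coe_X]
  have hfc : ((f : MvPolynomial (Fin n) ℂ) : MvPowerSeries (Fin n) ℂ)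
      = ∑ i, (MvPowerSeries.X i : MvPowerSeries (Fin n) ℂ) ^ α i
        + ∑ i, MvPowerSeries.C (lam i)
            * (MvPowerSeries.X i : MvPowerSeries (Fin n) ℂ) ^ d := by
    rw [hf, ← MvPolynomial.coeToMvPowerSeries.ringHom_apply, map_add, map_sum, map_sum]
    congr 1
    · refine Finset.sum_congr rfl fun i _ => ?_
      rw [map_pow, MvPolynomial.coeToMvPowerSeries.ringHom_apply, MvPolynomial.coe_X]
    · refine Finset.sum_congr rfl fun i _ => ?_
      rw [map_mul, map_pow, MvPolynomial.coeToMvPowerSeries.ringHom_apply,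
        MvPolynomial.coeToMvPowerSeries.ringHom_apply, MvPolynomial.coe_X, MvPolynomial.coe_C]
  rw [hg, hfc, map_sum]
  have hterm : ∀ i : Fin n,
      CEaux.subE h hne ((MvPowerSeries.X i : MvPowerSeries (Fin n) ℂ) ^ α i)
        = (MvPowerSeries.X i : MvPowerSeries (Fin n) ℂ) ^ α i
          + MvPowerSeries.C (lam i)
            * (MvPowerSeries.X i : MvPowerSeries (Fin n) ℂ) ^ d := by
    intro i
    rw [map_pow, CEaux.subE_X h hne i, mul_pow, hpow i, mul_add, mul_one, mul_left_comm,
      ← pow_add, show α i + (d - α i) = d by have := hαd i; omega]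
  rw [Finset.sum_congr rfl fun i _ => hterm i, Finset.sum_add_distrib]
end
end

section
/- Let n ≥ 1 and let α₁,…,αₙ be integers with αᵢ ≥ 2 for all i, and set d := (Σᵢ αᵢ) − (2n+1); assume d ≥ 0. Consider the ℂ-linear map from the subspace of polynomials in ℂ[x₁,…,xₙ] of total degree ≤ d to the quotient ring ℂ[[x₁,…,xₙ]]/⟨x₁^{α₁−1},…,xₙ^{αₙ−1}⟩, obtained by composing the inclusion of polynomials into the formal power series ring with the quotient projection. Then the cokernel of this map has ℂ-dimension exactly 1, while the analogous map from the subspace of polynomials of total degree ≤ d+1 is surjective. (This computes h¹(J_{Z^{ea}(H)/ℙⁿ}(d)) = 1 and h¹(J_{Z^{ea}(H)/ℙⁿ}(d+1)) = 0 for the hypersurface H of Theorem 3.1.) -/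
open MvPolynomial

noncomputable section

/-- For αᵢ ≥ 2 and d = (Σᵢ αᵢ) − (2n+1) ≥ 0, the ℂ-linear map from polynomials of total
degree ≤ d into ℂ[[x₁,…,xₙ]]/⟨x₁^{α₁−1},…,xₙ^{αₙ−1}⟩ (inclusion followed by the quotient
projection) has cokernel of dimension exactly 1, while the analogous map from polynomials
of total degree ≤ d+1 is surjective.  (This computes h¹(J_{Z^{ea}(H)/ℙⁿ}(d)) = 1 and
h¹(J_{Z^{ea}(H)/ℙⁿ}(d+1)) = 0 for the hypersurface H of Theorem 3.1.) -/
theorem statement_13 {n : ℕ} (hn : 1 ≤ n) (α : Fin n → ℕ) (hα2 : ∀ i, 2 ≤ α i)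
    (d : ℕ) (hd : d + (2 * n + 1) = ∑ i, α i)
    (I : Ideal (MvPowerSeries (Fin n) ℂ))
    (hI : I = Ideal.span
      (Set.range fun i => (MvPowerSeries.X i : MvPowerSeries (Fin n) ℂ) ^ (α i - 1)))
    (L : (k : ℕ) → (restrictTotalDegree (Fin n) ℂ k) →ₗ[ℂ] (MvPowerSeries (Fin n) ℂ ⧸ I))
    (hL : ∀ (k : ℕ) (p : restrictTotalDegree (Fin n) ℂ k),
      L k p = Ideal.Quotient.mk I
        ((p : MvPolynomial (Fin n) ℂ) : MvPowerSeries (Fin n) ℂ)) :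
    Module.finrank ℂ ((MvPowerSeries (Fin n) ℂ ⧸ I) ⧸ LinearMap.range (L d)) = 1 ∧
    Function.Surjective (L (d + 1)) := by
  classical
  -- the "corner" multidegree
  set M : Fin n →₀ ℕ := Finsupp.equivFunOnFinite.symm (fun i => α i - 2) with hMdef
  have hM : ∀ i, M i = α i - 2 := fun i => rfl
  have hsum : ∑ i, (α i - 2) = d + 1 := by
    have h1 : ∑ i, α i = ∑ i, ((α i - 2) + 2) :=
      Finset.sum_congr rfl (fun i _ => (Nat.sub_add_cancel (hα2 i)).symm)
    rw [Finset.sum_add_distrib, Finset.sum_const, Finset.card_univ, Fintype.card_fin,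
      smul_eq_mul] at h1
    omega
  have hMsum : ∑ i, M i = d + 1 := by
    rw [← hsum]; exact Finset.sum_congr rfl (fun i _ => hM i)
  have hsumM : ∀ m : Fin n →₀ ℕ, m ≤ M → ∑ i, m i ≤ d + 1 := by
    intro m hm
    rw [← hMsum]
    exact Finset.sum_le_sum (fun i _ => Finsupp.le_def.mp hm i)
  have hsumM' : ∀ m : Fin n →₀ ℕ, m ≤ M → m ≠ M → ∑ i, m i ≤ d := by
    intro m hm hne
    have h2 : ∑ i, m i < ∑ i, M i := by
      apply Finset.sum_lt_sum (fun i _ => Finsupp.le_def.mp hm i)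
      by_contra h
      push_neg at h
      exact hne (Finsupp.ext fun i =>
        le_antisymm (Finsupp.le_def.mp hm i) (h i (Finset.mem_univ i)))
    omega
  -- elements of I vanish on the box
  have hIsub : ∀ f, f ∈ I → ∀ m : Fin n →₀ ℕ, m ≤ M → MvPowerSeries.coeff m f = 0 := by
    intro f hf
    rw [hI] at hf
    induction hf using Submodule.span_induction with
    | mem x hx =>
      obtain ⟨i, rfl⟩ := hx
      intro m hm
      rw [MvPowerSeries.coeff_X_pow, if_neg]
      intro h
      have h1 : m i = α i - 1 := by rw [h]; simp
      have h2 : m i ≤ α i - 2 := by rw [← hM i]; exact Finsupp.le_def.mp hm i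
      have h3 := hα2 i
      omega
    | zero => intro m hm; simp
    | add x y hx hy ihx ihy =>
      intro m hm
      rw [map_add, ihx m hm, ihy m hm, add_zero]
    | smul r x hx ih =>
      intro m hm
      rw [smul_eq_mul, MvPowerSeries.coeff_mul]
      apply Finset.sum_eq_zero
      rintro ⟨u, v⟩ huv
      rw [Finset.HasAntidiagonal.mem_antidiagonal] at huv
      have hv : v ≤ m := by rw [← huv]; exact le_add_self
      rw [ih v (le_trans hv hm), mul_zero]
  -- power series vanishing on the box lie in I
  have hsup : ∀ f : MvPowerSeries (Fin n) ℂ,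
      (∀ m : Fin n →₀ ℕ, m ≤ M → MvPowerSeries.coeff m f = 0) → f ∈ I := by
    intro f hf
    set a : Fin n → (Fin n →₀ ℕ) := fun i => Finsupp.single i (α i - 1) with ha
    set cond : Fin n → (Fin n →₀ ℕ) → Prop :=
      fun i m => (α i - 1 ≤ m i ∧ ∀ j, j < i → m j < α j - 1) with hcond
    set g : Fin n → MvPowerSeries (Fin n) ℂ :=
      fun i m => if cond i (m + a i) then MvPowerSeries.coeff (m + a i) f else 0 with hg
    have hgcoeff : ∀ (i : Fin n) (m' : Fin n →₀ ℕ),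
        MvPowerSeries.coeff m' (g i)
          = if cond i (m' + a i) then MvPowerSeries.coeff (m' + a i) f else 0 :=
      fun i m' => rfl
    have key : f = ∑ i, (MvPowerSeries.monomial (a i) 1) * g i := by
      apply MvPowerSeries.ext
      intro m
      rw [map_sum]
      have hterm : ∀ i : Fin n,
          MvPowerSeries.coeff m ((MvPowerSeries.monomial (a i) 1) * g i)
            = if cond i m then MvPowerSeries.coeff m f else 0 := by
        intro i
        rw [MvPowerSeries.coeff_monomial_mul]
        by_cases hle : a i ≤ m
        · rw [if_pos hle, one_mul, hgcoeff, tsub_add_cancel_of_le hle]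
        · rw [if_neg hle, if_neg]
          intro hc
          exact hle (Finsupp.single_le_iff.mpr hc.1)
      rw [Finset.sum_congr rfl (fun i _ => hterm i)]
      by_cases hex : ∃ i, α i - 1 ≤ m i
      · set s : Finset (Fin n) := Finset.univ.filter (fun i => α i - 1 ≤ m i) with hs
        have hsne : s.Nonempty := by
          obtain ⟨i, hi⟩ := hex
          exact ⟨i, Finset.mem_filter.mpr ⟨Finset.mem_univ i, hi⟩⟩
        set i₀ := s.min' hsne with hi₀def
        have hi₀ : α i₀ - 1 ≤ m i₀ := (Finset.mem_filter.mp (s.min'_mem hsne)).2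
        have hcond₀ : cond i₀ m := by
          refine ⟨hi₀, fun j hj => ?_⟩
          by_contra hjm
          push_neg at hjm
          exact absurd (s.min'_le j (Finset.mem_filter.mpr ⟨Finset.mem_univ j, hjm⟩))
            (not_le.mpr hj)
        rw [Finset.sum_eq_single_of_mem i₀ (Finset.mem_univ i₀)]
        · rw [if_pos hcond₀]
        · intro j _ hj
          rw [if_neg]
          intro hcj
          rcases lt_or_gt_of_ne hj with hlt | hgt
          · exact absurd (s.min'_le j (Finset.mem_filter.mpr ⟨Finset.mem_univ j, hcj.1⟩))
              (not_le.mpr hlt)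
          · exact absurd hi₀ (not_le.mpr (hcj.2 i₀ hgt))
      · push_neg at hex
        have hm : m ≤ M := Finsupp.le_def.mpr fun i => by
          have h1 := hex i
          have h2 := hα2 i
          rw [hM i]
          omega
        rw [hf m hm]
        symm
        apply Finset.sum_eq_zero
        intro i _
        simp
    rw [key, hI]
    apply Ideal.sum_mem
    intro i _
    apply Ideal.mul_mem_right
    apply Ideal.subset_span
    exact ⟨i, MvPowerSeries.X_pow_eq i (α i - 1)⟩
  -- truncation polynomials
  have hcoe : ∀ (B : Finset (Fin n →₀ ℕ)) (f : MvPowerSeries (Fin n) ℂ) (m : Fin n →₀ ℕ),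
      MvPowerSeries.coeff m
        ((∑ u ∈ B, MvPolynomial.monomial u (MvPowerSeries.coeff u f) :
            MvPolynomial (Fin n) ℂ) : MvPowerSeries (Fin n) ℂ)
        = if m ∈ B then MvPowerSeries.coeff m f else 0 := by
    intro B f m
    rw [MvPolynomial.coeff_coe, MvPolynomial.coeff_sum]
    simp only [MvPolynomial.coeff_monomial]
    simp [Finset.sum_ite_eq]
  have hdegle : ∀ (B : Finset (Fin n →₀ ℕ)) (f : MvPowerSeries (Fin n) ℂ) (k : ℕ),
      (∀ m ∈ B, ∑ i, m i ≤ k) →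
      (∑ u ∈ B, MvPolynomial.monomial u (MvPowerSeries.coeff u f))
        ∈ restrictTotalDegree (Fin n) ℂ k := by
    intro B f k hB
    rw [mem_restrictTotalDegree]
    refine le_trans (totalDegree_finset_sum _ _) ?_
    apply Finset.sup_le
    intro u hu
    refine le_trans (totalDegree_monomial_le _ _) ?_
    rw [Finsupp.sum_fintype _ _ (fun _ => rfl)]
    exact hB u hu
  have hmk : ∀ f : MvPowerSeries (Fin n) ℂ,
      Ideal.Quotient.mk I
        ((∑ u ∈ Finset.Iic M, MvPolynomial.monomial u (MvPowerSeries.coeff u f) :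
            MvPolynomial (Fin n) ℂ) : MvPowerSeries (Fin n) ℂ)
        = Ideal.Quotient.mk I f := by
    intro f
    rw [Ideal.Quotient.mk_eq_mk_iff_sub_mem]
    apply hsup
    intro m hm
    rw [map_sub, hcoe, if_pos (Finset.mem_Iic.mpr hm), sub_self]
  -- surjectivity in degree d + 1
  have hsurj : Function.Surjective (L (d + 1)) := by
    intro q
    obtain ⟨f, rfl⟩ := Ideal.Quotient.mk_surjective q
    refine ⟨⟨_, hdegle (Finset.Iic M) f (d + 1)
      (fun m hm => hsumM m (Finset.mem_Iic.mp hm))⟩, ?_⟩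
    rw [hL]
    exact hmk f
  -- the corner functional θ
  have hker' : Submodule.restrictScalars ℂ I ≤ LinearMap.ker (MvPowerSeries.coeff (R := ℂ) M) :=
    fun f hf => hIsub f hf M le_rfl
  set θ : (MvPowerSeries (Fin n) ℂ ⧸ I) →ₗ[ℂ] ℂ :=
    (Submodule.liftQ (Submodule.restrictScalars ℂ I) (MvPowerSeries.coeff (R := ℂ) M) hker').comp
      (Submodule.Quotient.restrictScalarsEquiv ℂ I).symm.toLinearMap with hθ
  have hθmk : ∀ f : MvPowerSeries (Fin n) ℂ,
      θ (Ideal.Quotient.mk I f) = MvPowerSeries.coeff M f := by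
    intro f
    rfl
  have hθsurj : Function.Surjective θ := by
    intro c
    refine ⟨Ideal.Quotient.mk I (MvPowerSeries.monomial M c), ?_⟩
    rw [hθmk, MvPowerSeries.coeff_monomial_same]
  have hrange : LinearMap.range (L d) = LinearMap.ker θ := by
    apply le_antisymm
    · rintro x ⟨p, rfl⟩
      rw [LinearMap.mem_ker, hL, hθmk, MvPolynomial.coeff_coe]
      by_contra hc
      have hmem := MvPolynomial.mem_support_iff.mpr hc
      have h1 := le_totalDegree hmem
      have h2 := (mem_restrictTotalDegree _ _ _).mp p.2
      rw [Finsupp.sum_fintype _ _ (fun _ => rfl)] at h1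
      omega
    · intro q hq
      obtain ⟨f, rfl⟩ := Ideal.Quotient.mk_surjective q
      rw [LinearMap.mem_ker, hθmk] at hq
      set B : Finset (Fin n →₀ ℕ) := (Finset.Iic M).erase M with hB
      refine ⟨⟨∑ u ∈ B, MvPolynomial.monomial u (MvPowerSeries.coeff u f),
        hdegle B f d (fun m hm => hsumM' m (Finset.mem_Iic.mp (Finset.mem_of_mem_erase hm))
          (Finset.ne_of_mem_erase hm))⟩, ?_⟩
      rw [hL, Ideal.Quotient.mk_eq_mk_iff_sub_mem]
      apply hsup
      intro m hm
      rw [map_sub, hcoe]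
      by_cases hmM : m = M
      · subst hmM
        rw [if_neg (Finset.notMem_erase M _), hq, sub_zero]
      · rw [if_pos (Finset.mem_erase.mpr ⟨hmM, Finset.mem_Iic.mpr hm⟩), sub_self]
  constructor
  · rw [hrange, LinearEquiv.finrank_eq (θ.quotKerEquivOfSurjective hθsurj),
      Module.finrank_self]
  · exact hsurj
end
end
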